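/- arXiv:2605.19844 — 9 statements merged into one kernel-verified Lean document; each statement's English description precedes it below -/
import Mathlib

section
/- Let p ≥ 1 be a real number and define f(u) := (u² + 4p²)^p for u ∈ ℝ. Then f is twice continuously differentiable on ℝ, and for every u ≥ 0 and every ξ ∈ [−1,1], the second derivative satisfies f''(u+ξ) ≤ 4√e · p² · (u² + 4p²)^{p−1}. -/
/-- **Global curvature bound.** Let `p ≥ 1` and `f u = (u² + 4p²) ^ p` (real power).
Then `f` is twice continuously differentiable on `ℝ`, and for every `u ≥ 0` and
`ξ ∈ [-1,1]`, the second derivative satisfies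
`f'' (u + ξ) ≤ 4 √e p² (u² + 4p²) ^ (p - 1)`. -/
theorem curvature_bound (p : ℝ) (hp : 1 ≤ p) :
    ContDiff ℝ 2 (fun u : ℝ => (u ^ 2 + 4 * p ^ 2) ^ p) ∧
    ∀ u : ℝ, 0 ≤ u → ∀ ξ : ℝ, -1 ≤ ξ → ξ ≤ 1 →
      deriv (deriv (fun u : ℝ => (u ^ 2 + 4 * p ^ 2) ^ p)) (u + ξ) ≤
        4 * Real.sqrt (Real.exp 1) * p ^ 2 * (u ^ 2 + 4 * p ^ 2) ^ (p - 1) := by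
  have hp0 : 0 < p := lt_of_lt_of_le one_pos hp
  have hgpos : ∀ x : ℝ, 0 < x ^ 2 + 4 * p ^ 2 := fun x => by positivity
  have hgd : ∀ x : ℝ, HasDerivAt (fun u : ℝ => u ^ 2 + 4 * p ^ 2) (2 * x) x := by
    intro x
    simpa using (hasDerivAt_pow 2 x).add_const (4 * p ^ 2)
  have hd1 : ∀ x : ℝ, HasDerivAt (fun u : ℝ => (u ^ 2 + 4 * p ^ 2) ^ p)
      (2 * p * x * (x ^ 2 + 4 * p ^ 2) ^ (p - 1)) x := by
    intro x
    have := (hgd x).rpow_const (Or.inr hp)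
    convert this using 1
    ring
  have hderiv1 : deriv (fun u : ℝ => (u ^ 2 + 4 * p ^ 2) ^ p)
      = fun x : ℝ => 2 * p * x * (x ^ 2 + 4 * p ^ 2) ^ (p - 1) :=
    funext fun x => (hd1 x).deriv
  have hd2 : ∀ x : ℝ, HasDerivAt (fun x : ℝ => 2 * p * x * (x ^ 2 + 4 * p ^ 2) ^ (p - 1))
      (2 * p * (x ^ 2 + 4 * p ^ 2) ^ (p - 1)
        + 4 * p * (p - 1) * x ^ 2 * (x ^ 2 + 4 * p ^ 2) ^ (p - 2)) x := by
    intro x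
    have h2 : HasDerivAt (fun u : ℝ => (u ^ 2 + 4 * p ^ 2) ^ (p - 1))
        (2 * x * (p - 1) * (x ^ 2 + 4 * p ^ 2) ^ (p - 1 - 1)) x :=
      (hgd x).rpow_const (Or.inl (hgpos x).ne')
    have h1 : HasDerivAt (fun u : ℝ => 2 * p * u) (2 * p) x := by
      simpa using (hasDerivAt_id x).const_mul (2 * p)
    have := h1.mul h2
    refine this.congr_deriv ?_
    have hpe : p - 1 - 1 = p - 2 := by ring
    rw [hpe]
    ring
  constructor
  · rw [contDiff_iff_contDiffAt]
    intro x
    exact ContDiffAt.rpow_const_of_ne ((contDiffAt_id.pow 2).add contDiffAt_const) (hgpos x).ne'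
  · intro u hu ξ hξ1 hξ2
    rw [hderiv1, (hd2 (u + ξ)).deriv]
    set v : ℝ := u + ξ with hv
    set G : ℝ := v ^ 2 + 4 * p ^ 2 with hGdef
    set S : ℝ := u ^ 2 + 4 * p ^ 2 with hSdef
    have hG : 0 < G := hgpos v
    have hS : 0 < S := hgpos u
    have hv2 : v ^ 2 ≤ G := le_add_of_nonneg_right (by positivity)
    have hstep : v ^ 2 * G ^ (p - 2) ≤ G ^ (p - 1) := by
      have hGe : G ^ (p - 1) = G * G ^ (p - 2) := by
        rw [mul_comm, ← Real.rpow_add_one hG.ne' (p - 2)]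
        congr 1
        ring
      rw [hGe]
      exact mul_le_mul_of_nonneg_right hv2 (Real.rpow_nonneg hG.le _)
    have h1 : 2 * p * G ^ (p - 1) + 4 * p * (p - 1) * v ^ 2 * G ^ (p - 2)
        ≤ 4 * p ^ 2 * G ^ (p - 1) := by
      have hc : 0 ≤ 4 * p * (p - 1) := by nlinarith
      have h2 : 4 * p * (p - 1) * (v ^ 2 * G ^ (p - 2)) ≤ 4 * p * (p - 1) * G ^ (p - 1) :=
        mul_le_mul_of_nonneg_left hstep hc
      nlinarith [mul_nonneg hp0.le (Real.rpow_nonneg hG.le (p - 1))]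
    -- key : G ^ (p-1) ≤ exp (1/2) * S ^ (p-1)
    have hGle : G ≤ S * (1 + (2 * u + 1) / S) := by
      have hveq : S * (1 + (2 * u + 1) / S) = S + (2 * u + 1) := by
        field_simp
      rw [hveq, hGdef, hSdef]
      nlinarith [sq_nonneg (ξ - 1), sq_nonneg (ξ + 1)]
    have hhalf : (2 * u + 1) / S * (p - 1) ≤ 1 / 2 := by
      rw [div_mul_eq_mul_div, div_le_iff₀ hS]
      nlinarith [sq_nonneg (u - 2 * p + 1)]
    have key : G ^ (p - 1) ≤ Real.exp (1 / 2) * S ^ (p - 1) := by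
      have hpm1 : (0:ℝ) ≤ p - 1 := by linarith
      calc G ^ (p - 1) ≤ (S * (1 + (2 * u + 1) / S)) ^ (p - 1) :=
            Real.rpow_le_rpow hG.le hGle hpm1
        _ = S ^ (p - 1) * (1 + (2 * u + 1) / S) ^ (p - 1) :=
            Real.mul_rpow hS.le (by positivity)
        _ ≤ S ^ (p - 1) * Real.exp (1 / 2) := by
            apply mul_le_mul_of_nonneg_left _ (Real.rpow_nonneg hS.le _)
            calc (1 + (2 * u + 1) / S) ^ (p - 1)
                ≤ (Real.exp ((2 * u + 1) / S)) ^ (p - 1) := by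
                  apply Real.rpow_le_rpow (by positivity) _ hpm1
                  have := Real.add_one_le_exp ((2 * u + 1) / S)
                  linarith
              _ = Real.exp ((2 * u + 1) / S * (p - 1)) := (Real.exp_mul _ _).symm
              _ ≤ Real.exp (1 / 2) := Real.exp_le_exp.2 hhalf
        _ = Real.exp (1 / 2) * S ^ (p - 1) := by ring
    have hsqrt : Real.sqrt (Real.exp 1) = Real.exp (1 / 2) := by
      rw [Real.sqrt_eq_rpow, Real.exp_one_rpow]
    rw [hsqrt]
    calc 2 * p * G ^ (p - 1) + 4 * p * (p - 1) * v ^ 2 * G ^ (p - 2)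
        ≤ 4 * p ^ 2 * G ^ (p - 1) := h1
      _ ≤ 4 * p ^ 2 * (Real.exp (1 / 2) * S ^ (p - 1)) :=
          mul_le_mul_of_nonneg_left key (by positivity)
      _ = 4 * Real.exp (1 / 2) * p ^ 2 * S ^ (p - 1) := by ring
end

section
/- Let Q be a finite set of size m ≥ 1, n ≥ 1 an integer, p ≥ 1 and σ ≥ 0 reals, and define f(u) := (u² + 4p²)^p. Let z, z' : Q → ℝ be nonnegative functions, and suppose there exist reals Δ_q(k) ∈ [−1,1] (for q ∈ Q, k ∈ {1,…,n}) with Σ_{k=1}^n Δ_q(k) ≤ 0 and Σ_{k=1}^n Δ_q(k)² ≤ σ² for every q ∈ Q, such that Σ_{q∈Q} f(z'_q) ≤ (1/n) Σ_{k=1}^n Σ_{q∈Q} f(max{z_q + Δ_q(k), 0}). Then (Σ_{q∈Q} f(z'_q))^{1/p} ≤ (Σ_{q∈Q} f(z_q))^{1/p} + (2√e · p · σ² / n) · m^{1/p}. -/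
open Real Set

lemma osgb_inner_deriv (p x : ℝ) : HasDerivAt (fun x : ℝ => x^2 + 4*p^2) (2*x) x := by
  simpa using ((hasDerivAt_pow 2 x).add_const (4*p^2))

lemma osgb_F_deriv (p : ℝ) (hp : 1 ≤ p) (x : ℝ) :
    HasDerivAt (fun x : ℝ => (x^2 + 4*p^2) ^ p) (2*p*x*(x^2+4*p^2)^(p-1)) x := by
  have h := (osgb_inner_deriv p x).rpow_const (p := p) (Or.inr hp)
  convert h using 1; ring

lemma osgb_F_deriv2 (p : ℝ) (hp : 1 ≤ p) (x : ℝ) :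
    HasDerivAt (fun x : ℝ => 2*p*x*(x^2+4*p^2)^(p-1))
      (2*p*(x^2+4*p^2)^(p-1) + 4*p*(p-1)*x^2*(x^2+4*p^2)^(p-2)) x := by
  have hpos : (0:ℝ) < x^2 + 4*p^2 := by nlinarith [sq_nonneg x]
  have h1 : HasDerivAt (fun x : ℝ => (x^2+4*p^2)^(p-1))
      ((2*x)*(p-1)*(x^2+4*p^2)^(p-1-1)) x :=
    (osgb_inner_deriv p x).rpow_const (Or.inl hpos.ne')
  have h2 : HasDerivAt (fun x : ℝ => 2*p*x) (2*p) x := by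
    simpa using (hasDerivAt_id x).const_mul (2*p)
  have h3 := h2.mul h1
  refine h3.congr_deriv ?_
  rw [show p-1-1 = p-2 by ring]
  ring

-- second derivative bound on the interval
lemma osgb_deriv2_bound (p u : ℝ) (hp : 1 ≤ p) (hu : 0 ≤ u) (x : ℝ)
    (hx : x ∈ Icc (u-1) (u+1)) :
    2*p*(x^2+4*p^2)^(p-1) + 4*p*(p-1)*x^2*(x^2+4*p^2)^(p-2) ≤
      4*Real.sqrt (Real.exp 1)*p^2*(u^2+4*p^2)^(p-1) := by
  obtain ⟨hx1, hx2⟩ := hx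
  have hA : (0:ℝ) < u^2 + 4*p^2 := by nlinarith [sq_nonneg u]
  have hB : (0:ℝ) < x^2 + 4*p^2 := by nlinarith [sq_nonneg x]
  set A := u^2 + 4*p^2 with hAdef
  set B := x^2 + 4*p^2 with hBdef
  have hBp2 : B^(p-2) * B = B^(p-1) := by
    rw [show p-1 = (p-2)+1 by ring, Real.rpow_add hB, Real.rpow_one]
  -- step 1: LHS ≤ 4 p^2 B^(p-1)
  have h1 : 2*p*B^(p-1) + 4*p*(p-1)*x^2*B^(p-2) ≤ 4*p^2*B^(p-1) := by
    have hx2B : x^2 ≤ B := by nlinarith [sq_nonneg p]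
    have hBe : (0:ℝ) ≤ B^(p-2) := Real.rpow_nonneg hB.le _
    have hc0 : (0:ℝ) ≤ 4*p*(p-1)*B^(p-2) := by
      apply mul_nonneg (by nlinarith) hBe
    have : 4*p*(p-1)*x^2*B^(p-2) ≤ 4*p*(p-1)*(B^(p-2)*B) := by
      nlinarith [mul_le_mul_of_nonneg_left hx2B hc0]
    rw [hBp2] at this
    nlinarith [Real.rpow_nonneg hB.le (p-1)]
  -- step 2: B^(p-1) ≤ √e A^(p-1)
  have h2 : B^(p-1) ≤ Real.sqrt (Real.exp 1) * A^(p-1) := by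
    have hse : Real.sqrt (Real.exp 1) = Real.exp (1/2) := by
      rw [show Real.exp 1 = Real.exp (1/2) * Real.exp (1/2) by
        rw [← Real.exp_add]; norm_num]
      exact Real.sqrt_mul_self (Real.exp_pos _).le
    set t : ℝ := (2*u+1)/A with htdef
    have ht0 : 0 ≤ t := by positivity
    have hBA : B ≤ A * (1 + t) := by
      have : A * (1 + t) = A + (2*u+1) := by rw [htdef, mul_add, mul_one, mul_div_assoc', mul_div_cancel_left₀ _ hA.ne']
      rw [this]
      have : x^2 ≤ u^2 + 2*u + 1 := by nlinarith
      simp only [hAdef, hBdef]; linarith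
    have htp : t * (p-1) ≤ 1/2 := by
      rw [htdef, div_mul_eq_mul_div, div_le_iff₀ hA]
      nlinarith [sq_nonneg (u - 2*(p-1))]
    calc B^(p-1) ≤ (A*(1+t))^(p-1) :=
          Real.rpow_le_rpow hB.le hBA (by linarith)
      _ = A^(p-1) * (1+t)^(p-1) := by
          rw [Real.mul_rpow hA.le (by linarith)]
      _ ≤ A^(p-1) * (Real.exp t)^(p-1) := by
          refine mul_le_mul_of_nonneg_left ?_ (Real.rpow_nonneg hA.le _)
          refine Real.rpow_le_rpow (by linarith) ?_ (by linarith)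
          linarith [Real.add_one_le_exp t]
      _ = A^(p-1) * Real.exp (t*(p-1)) := by rw [← Real.exp_mul]
      _ ≤ A^(p-1) * Real.exp (1/2) := by
          refine mul_le_mul_of_nonneg_left ?_ (Real.rpow_nonneg hA.le _)
          exact Real.exp_le_exp.mpr htp
      _ = Real.sqrt (Real.exp 1) * A^(p-1) := by rw [hse]; ring
  calc 2*p*B^(p-1) + 4*p*(p-1)*x^2*B^(p-2) ≤ 4*p^2*B^(p-1) := h1
    _ ≤ 4*p^2*(Real.sqrt (Real.exp 1) * A^(p-1)) := by
        have : (0:ℝ) ≤ 4*p^2 := by positivity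
        exact mul_le_mul_of_nonneg_left h2 this
    _ = 4*Real.sqrt (Real.exp 1)*p^2*A^(p-1) := by ring

/-- Taylor-type bound via convexity of `M/2 x² - F x`. -/
lemma osgb_taylor (p u Δ : ℝ) (hp : 1 ≤ p) (hu : 0 ≤ u) (h1 : -1 ≤ Δ) (h2 : Δ ≤ 1) :
    ((u+Δ)^2 + 4*p^2) ^ p ≤ (u^2+4*p^2)^p + 2*p*u*(u^2+4*p^2)^(p-1)*Δ
      + 2*Real.sqrt (Real.exp 1)*p^2*(u^2+4*p^2)^(p-1)*Δ^2 := by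
  set M : ℝ := 4*Real.sqrt (Real.exp 1)*p^2*(u^2+4*p^2)^(p-1) with hM
  set h : ℝ → ℝ := fun x => M/2*x^2 - (x^2+4*p^2)^p with hh
  have hh' : ∀ x : ℝ, HasDerivAt h (M*x - 2*p*x*(x^2+4*p^2)^(p-1)) x := by
    intro x
    have hgo := (((hasDerivAt_pow 2 x).const_mul (M/2))).sub (osgb_F_deriv p hp x)
    refine hgo.congr_deriv ?_
    push_cast
    ring
  have hderiv : deriv h = fun x => M*x - 2*p*x*(x^2+4*p^2)^(p-1) :=
    funext fun x => (hh' x).deriv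
  have hh'' : ∀ x : ℝ, HasDerivAt (deriv h)
      (M - (2*p*(x^2+4*p^2)^(p-1) + 4*p*(p-1)*x^2*(x^2+4*p^2)^(p-2))) x := by
    intro x
    rw [hderiv]
    have hgo := (((hasDerivAt_id x).const_mul M)).sub (osgb_F_deriv2 p hp x)
    refine hgo.congr_deriv ?_
    ring
  have hconv : ConvexOn ℝ (Icc (u-1) (u+1)) h := by
    apply convexOn_of_deriv2_nonneg' (convex_Icc _ _)
    · exact fun x _ => (hh' x).differentiableAt.differentiableWithinAt
    · exact fun x _ => (hh'' x).differentiableAt.differentiableWithinAt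
    · intro x hx
      have : deriv^[2] h x = deriv (deriv h) x := rfl
      rw [this, (hh'' x).deriv]
      have := osgb_deriv2_bound p u hp hu x hx
      linarith
  have humem : u ∈ Icc (u-1) (u+1) := by constructor <;> linarith
  have hymem : u + Δ ∈ Icc (u-1) (u+1) := by constructor <;> linarith
  rcases lt_trichotomy Δ 0 with hd | hd | hd
  · have hs := hconv.slope_le_of_hasDerivAt hymem humem (by linarith) (hh' u)
    rw [slope_def_field] at hs
    rw [div_le_iff₀ (by linarith : (0:ℝ) < u - (u+Δ))] at hs
    simp only [hh] at hs
    nlinarith [hs]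
  · subst hd
    simp
  · have hs := hconv.le_slope_of_hasDerivAt humem hymem (by linarith) (hh' u)
    rw [slope_def_field] at hs
    rw [le_div_iff₀ (by linarith : (0:ℝ) < u + Δ - u)] at hs
    simp only [hh] at hs
    nlinarith [hs]

lemma osgb_step (p u Δ : ℝ) (hp : 1 ≤ p) (hu : 0 ≤ u) (h1 : -1 ≤ Δ) (h2 : Δ ≤ 1) :
    ((max (u+Δ) 0)^2 + 4*p^2) ^ p ≤ (u^2+4*p^2)^p + 2*p*u*(u^2+4*p^2)^(p-1)*Δ
      + 2*Real.sqrt (Real.exp 1)*p^2*(u^2+4*p^2)^(p-1)*Δ^2 := by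
  refine le_trans ?_ (osgb_taylor p u Δ hp hu h1 h2)
  apply Real.rpow_le_rpow (by positivity) ?_ (by linarith)
  have : (max (u+Δ) 0)^2 ≤ (u+Δ)^2 := by
    rcases le_total (u+Δ) 0 with h | h
    · rw [max_eq_right h]; simpa using sq_nonneg (u+Δ)
    · rw [max_eq_left h]
  linarith

/-- **One-step growth bound for the `p`-potential.**
Let `Q` be a finite set of size `m ≥ 1`, `n ≥ 1`, `p ≥ 1`, `σ ≥ 0`, and
`f u = (u² + 4p²) ^ p`. Suppose `z, z' : Q → ℝ` are nonnegative and there exist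
increments `Δ q k ∈ [-1,1]` satisfying the first- and second-moment conditions,
such that the potential of `z'` is at most the average potential over the `n`
reference increments. Then
`(∑ q, f (z' q)) ^ (1/p) ≤ (∑ q, f (z q)) ^ (1/p) + (2 √e p σ² / n) m ^ (1/p)`. -/
theorem one_step_growth_bound (Q : Type*) [Fintype Q] (hm : 1 ≤ Fintype.card Q)
    (n : ℕ) (hn : 1 ≤ n) (p σ : ℝ) (hp : 1 ≤ p) (hσ : 0 ≤ σ)
    (z z' : Q → ℝ) (hz : ∀ q, 0 ≤ z q) (hz' : ∀ q, 0 ≤ z' q)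
    (hΔ : ∃ Δ : Q → Fin n → ℝ,
      (∀ q k, -1 ≤ Δ q k ∧ Δ q k ≤ 1) ∧
      (∀ q, ∑ k, Δ q k ≤ 0) ∧
      (∀ q, ∑ k, (Δ q k) ^ 2 ≤ σ ^ 2) ∧
      (∑ q, ((z' q) ^ 2 + 4 * p ^ 2) ^ p ≤
        (1 / (n : ℝ)) * ∑ k, ∑ q, ((max (z q + Δ q k) 0) ^ 2 + 4 * p ^ 2) ^ p)) :
    (∑ q, ((z' q) ^ 2 + 4 * p ^ 2) ^ p) ^ (1 / p) ≤
      (∑ q, ((z q) ^ 2 + 4 * p ^ 2) ^ p) ^ (1 / p) +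
        (2 * Real.sqrt (Real.exp 1) * p * σ ^ 2 / (n : ℝ)) *
          (Fintype.card Q : ℝ) ^ (1 / p) := by
  obtain ⟨Δ, hbd, hsum1, hsum2, hpot⟩ := hΔ
  have hp0 : (0:ℝ) < p := by linarith
  have hn0 : (0:ℝ) < (n:ℝ) := by exact_mod_cast hn
  have hse : (0:ℝ) ≤ Real.sqrt (Real.exp 1) := Real.sqrt_nonneg _
  have hNE : Nonempty Q := Fintype.card_pos_iff.mp (by omega)
  set m : ℝ := (Fintype.card Q : ℝ) with hmdef
  have hm1 : (1:ℝ) ≤ m := by rw [hmdef]; exact_mod_cast hm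
  have hm0 : (0:ℝ) < m := by linarith
  have hXpos : ∀ q, (0:ℝ) < (z q)^2 + 4*p^2 := fun q => by nlinarith [sq_nonneg (z q)]
  set Φ : ℝ := ∑ q, ((z q)^2 + 4*p^2)^p with hΦdef
  set Φ' : ℝ := ∑ q, ((z' q)^2 + 4*p^2)^p with hΦ'def
  set S1 : ℝ := ∑ q, ((z q)^2 + 4*p^2)^(p-1) with hS1def
  have hΦpos : 0 < Φ := Finset.sum_pos
    (fun q _ => Real.rpow_pos_of_pos (hXpos q) p) Finset.univ_nonempty
  have hΦ'0 : 0 ≤ Φ' := Finset.sum_nonneg fun q _ => Real.rpow_nonneg (by positivity) p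
  have hS10 : 0 ≤ S1 := Finset.sum_nonneg fun q _ => Real.rpow_nonneg (hXpos q).le _
  -- per-row bound
  have hline : ∀ q, ∑ k, ((max (z q + Δ q k) 0)^2 + 4*p^2) ^ p ≤
      (n:ℝ)*((z q)^2+4*p^2)^p
        + 2*Real.sqrt (Real.exp 1)*p^2*((z q)^2+4*p^2)^(p-1)*σ^2 := by
    intro q
    have hX1 : (0:ℝ) ≤ ((z q)^2+4*p^2)^(p-1) := Real.rpow_nonneg (hXpos q).le _
    calc ∑ k, ((max (z q + Δ q k) 0)^2 + 4*p^2) ^ p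
        ≤ ∑ k : Fin n, (((z q)^2+4*p^2)^p + 2*p*(z q)*((z q)^2+4*p^2)^(p-1)*(Δ q k)
            + 2*Real.sqrt (Real.exp 1)*p^2*((z q)^2+4*p^2)^(p-1)*(Δ q k)^2) :=
          Finset.sum_le_sum fun k _ =>
            osgb_step p (z q) (Δ q k) hp (hz q) (hbd q k).1 (hbd q k).2
      _ = (n:ℝ)*((z q)^2+4*p^2)^p
            + (2*p*(z q)*((z q)^2+4*p^2)^(p-1)) * (∑ k, Δ q k)
            + (2*Real.sqrt (Real.exp 1)*p^2*((z q)^2+4*p^2)^(p-1)) * (∑ k, (Δ q k)^2) := by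
          rw [Finset.sum_add_distrib, Finset.sum_add_distrib, ← Finset.mul_sum,
            ← Finset.mul_sum, Finset.sum_const, Finset.card_univ, Fintype.card_fin,
            nsmul_eq_mul]
      _ ≤ (n:ℝ)*((z q)^2+4*p^2)^p + 0
            + 2*Real.sqrt (Real.exp 1)*p^2*((z q)^2+4*p^2)^(p-1)*σ^2 := by
          have h1 : (2*p*(z q)*((z q)^2+4*p^2)^(p-1)) * (∑ k, Δ q k) ≤ 0 :=
            mul_nonpos_of_nonneg_of_nonpos
              (by have := hz q; positivity) (hsum1 q)
          have h2 : (2*Real.sqrt (Real.exp 1)*p^2*((z q)^2+4*p^2)^(p-1)) * (∑ k, (Δ q k)^2)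
              ≤ (2*Real.sqrt (Real.exp 1)*p^2*((z q)^2+4*p^2)^(p-1)) * σ^2 :=
            mul_le_mul_of_nonneg_left (hsum2 q) (by positivity)
          linarith
      _ = (n:ℝ)*((z q)^2+4*p^2)^p
            + 2*Real.sqrt (Real.exp 1)*p^2*((z q)^2+4*p^2)^(p-1)*σ^2 := by ring
  -- global potential bound
  have hmain : Φ' ≤ Φ + (2*Real.sqrt (Real.exp 1)*p^2*σ^2/(n:ℝ)) * S1 := by
    have hswap : ∑ k, ∑ q, ((max (z q + Δ q k) 0)^2 + 4*p^2) ^ p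
        = ∑ q, ∑ k, ((max (z q + Δ q k) 0)^2 + 4*p^2) ^ p := Finset.sum_comm
    have h2 : ∑ q, ∑ k, ((max (z q + Δ q k) 0)^2 + 4*p^2) ^ p
        ≤ (n:ℝ)*Φ + (2*Real.sqrt (Real.exp 1)*p^2*σ^2) * S1 := by
      calc ∑ q, ∑ k, ((max (z q + Δ q k) 0)^2 + 4*p^2) ^ p
          ≤ ∑ q, ((n:ℝ)*((z q)^2+4*p^2)^p
              + 2*Real.sqrt (Real.exp 1)*p^2*((z q)^2+4*p^2)^(p-1)*σ^2) :=
            Finset.sum_le_sum fun q _ => hline q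
        _ = (n:ℝ)*Φ + (2*Real.sqrt (Real.exp 1)*p^2*σ^2) * S1 := by
            rw [Finset.sum_add_distrib, hΦdef, hS1def, Finset.mul_sum, Finset.mul_sum]
            congr 1
            apply Finset.sum_congr rfl
            intro q _
            ring
    have h4 : (1/(n:ℝ)) * (∑ k, ∑ q, ((max (z q + Δ q k) 0)^2 + 4*p^2) ^ p)
        ≤ (1/(n:ℝ)) * ((n:ℝ)*Φ + (2*Real.sqrt (Real.exp 1)*p^2*σ^2) * S1) :=
      mul_le_mul_of_nonneg_left (le_of_le_of_eq (le_of_eq hswap) rfl |>.trans h2)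
        (by positivity)
    have h3 := le_trans hpot h4
    calc Φ' ≤ (1/(n:ℝ)) * ((n:ℝ)*Φ + (2*Real.sqrt (Real.exp 1)*p^2*σ^2) * S1) := h3
      _ = Φ + (2*Real.sqrt (Real.exp 1)*p^2*σ^2/(n:ℝ)) * S1 := by
          field_simp
  -- Hölder step
  have hS1b : S1 ≤ m^(1/p) * Φ^(1-1/p) := by
    rcases eq_or_lt_of_le hp with heq | hlt
    · have hp1 : p = 1 := heq.symm
      subst hp1
      have e1 : S1 = m := by
        rw [hS1def, hmdef, show (1:ℝ)-1 = 0 by norm_num]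
        simp [Real.rpow_zero, Finset.card_univ]
      rw [e1]
      norm_num
    · have hp1 : (0:ℝ) < p - 1 := by linarith
      set r : ℝ := p/(p-1) with hr
      have hr1 : 1 ≤ r := by rw [hr, le_div_iff₀ hp1]; linarith
      have hw' : ∑ _q : Q, 1/m = (1:ℝ) := by
        rw [Finset.sum_const, Finset.card_univ, nsmul_eq_mul, ← hmdef]
        field_simp
      have hkey := Real.arith_mean_le_rpow_mean Finset.univ (fun _ => 1/m)
        (fun q => ((z q)^2+4*p^2)^(p-1)) (fun q _ => by positivity) hw'
        (fun q _ => Real.rpow_nonneg (hXpos q).le _) hr1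
      have hpow : ∀ q : Q, ((((z q)^2+4*p^2)^(p-1))^r : ℝ) = ((z q)^2+4*p^2)^p := by
        intro q
        rw [← Real.rpow_mul (hXpos q).le]
        congr 1
        rw [hr]
        field_simp
      simp only [hpow] at hkey
      rw [← Finset.mul_sum, ← Finset.mul_sum, ← hS1def, ← hΦdef] at hkey
      have hrinv : 1/r = 1 - 1/p := by
        rw [hr, one_div_div]
        field_simp
      have hmm : m * ((1:ℝ)/m)^((1:ℝ)-1/p) = m^(1/p) := by
        rw [one_div, Real.inv_rpow hm0.le]
        have h5 : m^((1:ℝ)/p) * m^((1:ℝ)-1/p) = m := by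
          rw [← Real.rpow_add hm0, show (1:ℝ)/p + (1-1/p) = 1 by ring, Real.rpow_one]
        have hne : m^((1:ℝ)-1/p) ≠ 0 := (Real.rpow_pos_of_pos hm0 _).ne'
        rw [← div_eq_mul_inv, div_eq_iff hne]
        linear_combination -h5
      calc S1 = m * ((1/m) * S1) := by field_simp
        _ ≤ m * ((1/m)*Φ)^(1/r) := mul_le_mul_of_nonneg_left hkey hm0.le
        _ = m * (((1:ℝ)/m)^((1:ℝ)-1/p) * Φ^((1:ℝ)-1/p)) := by
            rw [Real.mul_rpow (by positivity) hΦpos.le, hrinv]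
        _ = m^(1/p) * Φ^(1-1/p) := by rw [← mul_assoc, hmm]
  -- Bernoulli finish
  set a : ℝ := Φ^(1/p) with ha
  have ha0 : 0 < a := Real.rpow_pos_of_pos hΦpos _
  set K : ℝ := 2*Real.sqrt (Real.exp 1)*p*σ^2/(n:ℝ) * m^(1/p) with hK
  have hK0 : 0 ≤ K := by positivity
  have hap : a^p = Φ := by
    rw [ha, ← Real.rpow_mul hΦpos.le, one_div_mul_cancel hp0.ne', Real.rpow_one]
  have hap1 : a^(p-1) = Φ^((1:ℝ)-1/p) := by
    rw [ha, ← Real.rpow_mul hΦpos.le]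
    congr 1
    field_simp
  have hBern : a^p + p*(a^(p-1)*K) ≤ (a+K)^p := by
    have hs := one_add_mul_self_le_rpow_one_add
      (s := K/a) (le_trans (by norm_num) (div_nonneg hK0 ha0.le)) hp
    have hmul := mul_le_mul_of_nonneg_left hs (Real.rpow_nonneg ha0.le p)
    have e1 : a^p * (1+K/a)^p = (a+K)^p := by
      rw [← Real.mul_rpow ha0.le (by positivity)]
      congr 1
      field_simp
    have e2 : a^p * (1 + p*(K/a)) = a^p + p*(a^(p-1)*K) := by
      have e3 : a^p = a^(p-1) * a := by
        rw [← Real.rpow_add_one ha0.ne']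
        norm_num
      rw [e3]
      field_simp
    rw [e1, e2] at hmul
    exact hmul
  have hfin : Φ' ≤ (a+K)^p := by
    calc Φ' ≤ Φ + (2*Real.sqrt (Real.exp 1)*p^2*σ^2/(n:ℝ)) * S1 := hmain
      _ ≤ Φ + (2*Real.sqrt (Real.exp 1)*p^2*σ^2/(n:ℝ)) * (m^(1/p) * Φ^(1-1/p)) :=
          add_le_add_right (mul_le_mul_of_nonneg_left hS1b (by positivity)) _
      _ = a^p + p*(a^(p-1)*K) := by rw [hap, hap1, hK]; ring
      _ ≤ (a+K)^p := hBern
  calc Φ'^(1/p) ≤ ((a+K)^p)^(1/p) :=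
        Real.rpow_le_rpow hΦ'0 hfin (by positivity)
    _ = a + K := by
        rw [← Real.rpow_mul (by positivity), mul_one_div_cancel hp0.ne', Real.rpow_one]
end

section
/- Let Q be a finite set of size m ≥ 1, n ≥ 1 an integer, p ≥ 1 and σ ≥ 0 reals, and let (z^t)_{t≥0} be a deficit process on Q satisfying the potential-rule moment conditions with parameters n, σ², p. Then for every t ≥ 0, (Σ_{q∈Q} f(z^t_q))^{1/p} ≤ m^{1/p} · (4p² + 2√e · p · σ² · t / n). -/
open Finset

/-- The potential component `f p u = (u² + 4p²) ^ p` (real power). -/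
noncomputable def potComp (p u : ℝ) : ℝ := (u ^ 2 + 4 * p ^ 2) ^ p

/-- A deficit process on `Q` satisfying the potential-rule moment conditions with
parameters `n`, `σ²`, `p`: all deficits are nonnegative, initially zero, and at
each round there are increments `Δ q k ∈ [-1,1]` with nonpositive sum and squared
sum at most `σ²`, such that the next potential is at most the average potential
over the `n` reference increments. -/
def DeficitProcess (Q : Type*) [Fintype Q] (n : ℕ) (σ p : ℝ) (z : ℕ → Q → ℝ) : Prop :=
  (∀ t q, 0 ≤ z t q) ∧ (∀ q, z 0 q = 0) ∧
  ∀ t : ℕ, ∃ Δ : Q → Fin n → ℝ,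
    (∀ q k, -1 ≤ Δ q k ∧ Δ q k ≤ 1) ∧
    (∀ q, ∑ k, Δ q k ≤ 0) ∧
    (∀ q, ∑ k, (Δ q k) ^ 2 ≤ σ ^ 2) ∧
    (∑ q, potComp p (z (t + 1) q) ≤
      (1 / (n : ℝ)) * ∑ k, ∑ q, potComp p (max (z t q + Δ q k) 0))

namespace PB
open Real

variable {p : ℝ}

lemma gpos (hp : 1 ≤ p) (x : ℝ) : 0 < x ^ 2 + 4 * p ^ 2 := by nlinarith [sq_nonneg x]

noncomputable def F (p x : ℝ) : ℝ := (x ^ 2 + 4 * p ^ 2) ^ p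
noncomputable def F' (p x : ℝ) : ℝ := 2 * p * x * (x ^ 2 + 4 * p ^ 2) ^ (p - 1)
noncomputable def F'' (p x : ℝ) : ℝ :=
  2 * p * (x ^ 2 + 4 * p ^ 2) ^ (p - 1) + 4 * p * (p - 1) * x ^ 2 * (x ^ 2 + 4 * p ^ 2) ^ (p - 2)

lemma hasDerivG (x : ℝ) : HasDerivAt (fun y : ℝ => y ^ 2 + 4 * p ^ 2) (2 * x) x := by
  simpa using (hasDerivAt_pow 2 x).add_const (4 * p ^ 2)

lemma hasDerivF (hp : 1 ≤ p) (x : ℝ) : HasDerivAt (F p) (F' p x) x := by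
  have h := (hasDerivG (p := p) x).rpow_const (p := p) (Or.inl (gpos hp x).ne')
  exact h.congr_deriv (by unfold F'; ring)

lemma hasDerivF' (hp : 1 ≤ p) (x : ℝ) : HasDerivAt (F' p) (F'' p x) x := by
  have h1 : HasDerivAt (fun y : ℝ => 2 * p * y) (2 * p) x := by
    simpa using (hasDerivAt_id x).const_mul (2 * p)
  have h2 := (hasDerivG (p := p) x).rpow_const (p := p - 1) (Or.inl (gpos hp x).ne')
  have h3 := h1.mul h2
  have he : p - 1 - 1 = p - 2 := by ring
  rw [he] at h3
  exact h3.congr_deriv (by unfold F''; ring)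


lemma F''_nonneg (hp : 1 ≤ p) (x : ℝ) : 0 ≤ F'' p x := by
  have h1 := (gpos hp x).le
  have a1 : (0:ℝ) ≤ (x ^ 2 + 4 * p ^ 2) ^ (p - 1) := rpow_nonneg h1 _
  have a2 : (0:ℝ) ≤ (x ^ 2 + 4 * p ^ 2) ^ (p - 2) := rpow_nonneg h1 _
  have hxsq := sq_nonneg x
  unfold F''
  have hp1 : (0:ℝ) ≤ p - 1 := by linarith
  positivity

lemma F''_le (hp : 1 ≤ p) {u x : ℝ} (hu : 0 ≤ u) (h1 : u - 1 ≤ x) (h2 : x ≤ u + 1) :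
    F'' p x ≤ 4 * Real.sqrt (Real.exp 1) * p ^ 2 * (u ^ 2 + 4 * p ^ 2) ^ (p - 1) := by
  have hgx := gpos hp x
  have hgu := gpos hp u
  have hA : (0:ℝ) ≤ (x ^ 2 + 4 * p ^ 2) ^ (p - 1) := rpow_nonneg hgx.le _
  have hB : (0:ℝ) ≤ (x ^ 2 + 4 * p ^ 2) ^ (p - 2) := rpow_nonneg hgx.le _
  -- step 1 : F'' p x ≤ 4 p^2 * (x^2+4p^2)^(p-1)
  have hsplit : (x ^ 2 + 4 * p ^ 2) ^ (p - 1)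
      = (x ^ 2 + 4 * p ^ 2) ^ (p - 2) * (x ^ 2 + 4 * p ^ 2) := by
    rw [show p - 1 = (p - 2) + 1 by ring, Real.rpow_add_one hgx.ne']
  have hxB : x ^ 2 * (x ^ 2 + 4 * p ^ 2) ^ (p - 2) ≤ (x ^ 2 + 4 * p ^ 2) ^ (p - 1) := by
    rw [hsplit]
    nlinarith [sq_nonneg p]
  have step1 : F'' p x ≤ 4 * p ^ 2 * (x ^ 2 + 4 * p ^ 2) ^ (p - 1) := by
    unfold F''
    nlinarith [mul_le_mul_of_nonneg_left hxB (by nlinarith : (0:ℝ) ≤ 4 * p * (p - 1))]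
  -- step 2 : (x^2+4p^2)^(p-1) ≤ √e (u^2+4p^2)^(p-1)
  have h2p : (0:ℝ) < 2 * p - 1 := by linarith
  have hx2 : x ^ 2 ≤ (u + 1) ^ 2 := sq_le_sq' (by linarith) h2
  have hkey : (2 * p - 1) * (2 * u + 1) ≤ u ^ 2 + 4 * p ^ 2 := by
    nlinarith [sq_nonneg (u - 2 * p + 1)]
  have hgle : x ^ 2 + 4 * p ^ 2 ≤ (1 + 1 / (2 * p - 1)) * (u ^ 2 + 4 * p ^ 2) := by
    have : (2 * u + 1) ≤ (u ^ 2 + 4 * p ^ 2) / (2 * p - 1) := by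
      rw [le_div_iff₀ h2p]; nlinarith
    have hexp : (1 + 1 / (2 * p - 1)) * (u ^ 2 + 4 * p ^ 2)
        = (u ^ 2 + 4 * p ^ 2) + (u ^ 2 + 4 * p ^ 2) / (2 * p - 1) := by
      field_simp
    rw [hexp]; nlinarith
  have hone : (0:ℝ) ≤ 1 + 1 / (2 * p - 1) := by positivity
  have step2 : (x ^ 2 + 4 * p ^ 2) ^ (p - 1)
      ≤ Real.sqrt (Real.exp 1) * (u ^ 2 + 4 * p ^ 2) ^ (p - 1) := by
    have hr1 : (x ^ 2 + 4 * p ^ 2) ^ (p - 1)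
        ≤ ((1 + 1 / (2 * p - 1)) * (u ^ 2 + 4 * p ^ 2)) ^ (p - 1) :=
      Real.rpow_le_rpow hgx.le hgle (by linarith)
    have hr2 : ((1 + 1 / (2 * p - 1)) * (u ^ 2 + 4 * p ^ 2)) ^ (p - 1)
        = (1 + 1 / (2 * p - 1)) ^ (p - 1) * (u ^ 2 + 4 * p ^ 2) ^ (p - 1) :=
      Real.mul_rpow hone hgu.le
    have hr3 : (1 + 1 / (2 * p - 1)) ^ (p - 1) ≤ Real.sqrt (Real.exp 1) := by
      have hb : (1 + 1 / (2 * p - 1)) ≤ Real.exp (1 / (2 * p - 1)) := by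
        have := Real.add_one_le_exp (1 / (2 * p - 1)); linarith
      have hr4 : (1 + 1 / (2 * p - 1)) ^ (p - 1) ≤ (Real.exp (1 / (2 * p - 1))) ^ (p - 1) :=
        Real.rpow_le_rpow hone hb (by linarith)
      have hr5 : (Real.exp (1 / (2 * p - 1))) ^ (p - 1) = Real.exp (1 / (2 * p - 1) * (p - 1)) :=
        (Real.exp_mul _ _).symm
      have hr6 : 1 / (2 * p - 1) * (p - 1) ≤ 1 / 2 := by
        rw [div_mul_eq_mul_div, div_le_div_iff₀ h2p (by norm_num)]; nlinarith
      have hr7 : Real.sqrt (Real.exp 1) = Real.exp (1 / 2) := by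
        rw [Real.sqrt_eq_rpow, Real.exp_one_rpow]
      calc (1 + 1 / (2 * p - 1)) ^ (p - 1) ≤ Real.exp (1 / (2 * p - 1) * (p - 1)) := by
            rw [← hr5]; exact hr4
        _ ≤ Real.exp (1 / 2) := Real.exp_le_exp.mpr hr6
        _ = Real.sqrt (Real.exp 1) := hr7.symm
    calc (x ^ 2 + 4 * p ^ 2) ^ (p - 1)
        ≤ (1 + 1 / (2 * p - 1)) ^ (p - 1) * (u ^ 2 + 4 * p ^ 2) ^ (p - 1) := by
          rw [← hr2]; exact hr1
      _ ≤ Real.sqrt (Real.exp 1) * (u ^ 2 + 4 * p ^ 2) ^ (p - 1) :=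
          mul_le_mul_of_nonneg_right hr3 (rpow_nonneg hgu.le _)
  calc F'' p x ≤ 4 * p ^ 2 * (x ^ 2 + 4 * p ^ 2) ^ (p - 1) := step1
    _ ≤ 4 * p ^ 2 * (Real.sqrt (Real.exp 1) * (u ^ 2 + 4 * p ^ 2) ^ (p - 1)) := by
        apply mul_le_mul_of_nonneg_left step2; positivity
    _ = 4 * Real.sqrt (Real.exp 1) * p ^ 2 * (u ^ 2 + 4 * p ^ 2) ^ (p - 1) := by ring

lemma taylor_bound (hp : 1 ≤ p) {u δ : ℝ} (hu : 0 ≤ u) (hδ1 : -1 ≤ δ) (hδ2 : δ ≤ 1) :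
    F p (u + δ) ≤ F p u + F' p u * δ
      + 2 * Real.sqrt (Real.exp 1) * p ^ 2 * (u ^ 2 + 4 * p ^ 2) ^ (p - 1) * δ ^ 2 := by
  set M : ℝ := 4 * Real.sqrt (Real.exp 1) * p ^ 2 * (u ^ 2 + 4 * p ^ 2) ^ (p - 1) with hM
  -- K s = F' (u+s) - F' u - M s  is antitone on [-1,1]
  set K : ℝ → ℝ := fun s => F' p (u + s) - F' p u - M * s with hK
  have hKd : ∀ s : ℝ, HasDerivAt K (F'' p (u + s) - M) s := by
    intro s
    have h1 : HasDerivAt (fun s : ℝ => F' p (u + s)) (F'' p (u + s)) s := by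
      have := (hasDerivF' hp (u + s)).comp s ((hasDerivAt_id s).const_add u)
      exact this.congr_deriv (mul_one _)
    exact ((h1.sub_const (F' p u)).sub ((hasDerivAt_id s).const_mul M)).congr_deriv (by ring)
  have hKanti : AntitoneOn K (Set.Icc (-1 : ℝ) 1) := by
    apply antitoneOn_of_deriv_nonpos (convex_Icc _ _)
    · exact (Differentiable.continuous (fun s => (hKd s).differentiableAt)).continuousOn
    · intro s _; exact (hKd s).differentiableAt.differentiableWithinAt
    · intro s hs
      rw [interior_Icc] at hs
      rw [(hKd s).deriv]
      have := F''_le hp hu (by linarith [hs.1] : u - 1 ≤ u + s) (by linarith [hs.2])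
      linarith
  have hK0 : K 0 = 0 := by simp [hK]
  -- G s = F u + F' u s + (M/2) s² - F (u+s)
  set G : ℝ → ℝ := fun s => F p u + F' p u * s + (M / 2) * s ^ 2 - F p (u + s) with hG
  have hGd : ∀ s : ℝ, HasDerivAt G (-(K s)) s := by
    intro s
    have h1 : HasDerivAt (fun s : ℝ => F p (u + s)) (F' p (u + s)) s := by
      have := (hasDerivF hp (u + s)).comp s ((hasDerivAt_id s).const_add u)
      exact this.congr_deriv (mul_one _)
    have h2 : HasDerivAt (fun s : ℝ => F p u + F' p u * s + (M / 2) * s ^ 2)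
        (F' p u + (M / 2) * (2 * s)) s := by
      have ha : HasDerivAt (fun s : ℝ => F' p u * s) (F' p u) s := by
        simpa using (hasDerivAt_id s).const_mul (F' p u)
      have hb : HasDerivAt (fun s : ℝ => (M / 2) * s ^ 2) ((M / 2) * (2 * s)) s := by
        simpa using (hasDerivAt_pow 2 s).const_mul (M / 2)
      exact (ha.const_add (F p u)).add hb
    have := h2.sub h1
    exact this.congr_deriv (by simp only [hK]; ring)
  have hG0 : G 0 = 0 := by simp [hG]
  have key : ∀ s ∈ Set.Icc (-1 : ℝ) 1, 0 ≤ G s := by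
    intro s hs
    rcases le_total 0 s with h0 | h0
    · have hmono : MonotoneOn G (Set.Icc (0 : ℝ) 1) := by
        apply monotoneOn_of_deriv_nonneg (convex_Icc _ _)
        · exact (Differentiable.continuous (fun s => (hGd s).differentiableAt)).continuousOn
        · intro x _; exact (hGd x).differentiableAt.differentiableWithinAt
        · intro x hx
          rw [interior_Icc] at hx
          rw [(hGd x).deriv]
          have : K x ≤ K 0 := hKanti (by constructor <;> norm_num)
            ⟨by linarith [hx.1], by linarith [hx.2]⟩ hx.1.le
          rw [hK0] at this; linarith
      have := hmono ⟨le_refl 0, by norm_num⟩ ⟨h0, hs.2⟩ h0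
      rw [hG0] at this; exact this
    · have hanti : AntitoneOn G (Set.Icc (-1 : ℝ) 0) := by
        apply antitoneOn_of_deriv_nonpos (convex_Icc _ _)
        · exact (Differentiable.continuous (fun s => (hGd s).differentiableAt)).continuousOn
        · intro x _; exact (hGd x).differentiableAt.differentiableWithinAt
        · intro x hx
          rw [interior_Icc] at hx
          rw [(hGd x).deriv]
          have : K 0 ≤ K x := hKanti ⟨by linarith [hx.1], by linarith [hx.2]⟩
            (by constructor <;> norm_num) hx.2.le
          rw [hK0] at this; linarith
      have := hanti ⟨hs.1, h0⟩ ⟨by norm_num, le_refl 0⟩ h0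
      rw [hG0] at this; exact this
  have := key δ ⟨hδ1, hδ2⟩
  simp only [hG] at this
  nlinarith [this]

lemma holder {Q : Type*} [Fintype Q] (hm : 1 ≤ Fintype.card Q) (hp : 1 ≤ p)
    (g : Q → ℝ) (hg : ∀ q, 0 ≤ g q) :
    ∑ q, g q ^ (p - 1) ≤ (Fintype.card Q : ℝ) ^ (1 / p) * (∑ q, g q ^ p) ^ ((p - 1) / p) := by
  have hm0 : (0:ℝ) < (Fintype.card Q : ℝ) := by exact_mod_cast hm
  set m : ℝ := (Fintype.card Q : ℝ) with hmdef
  rcases eq_or_lt_of_le hp with rfl | hp1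
  · simp only [sub_self, Real.rpow_zero, zero_div]
    simp [Finset.card_univ]; exact hmdef.ge
  · have hp0 : 0 < p := by linarith
    have hs : 0 < p - 1 := by linarith
    have hP : 1 ≤ p / (p - 1) := by
      rw [le_div_iff₀ hs]; linarith
    have key := Real.arith_mean_le_rpow_mean (Finset.univ : Finset Q)
      (fun _ => 1 / m) (fun q => g q ^ (p - 1))
      (fun i _ => by positivity)
      (by simp [Finset.card_univ]; field_simp; exact hmdef.symm)
      (fun i _ => rpow_nonneg (hg i) _) hP
    have hz : ∀ q : Q, (g q ^ (p - 1)) ^ (p / (p - 1)) = g q ^ p := by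
      intro q
      rw [← Real.rpow_mul (hg q)]
      congr 1; field_simp
    have hinv : 1 / (p / (p - 1)) = (p - 1) / p := by
      rw [one_div_div]
    simp only [hz, hinv] at key
    rw [← Finset.mul_sum, ← Finset.mul_sum] at key
    have hΦ : (0:ℝ) ≤ ∑ q, g q ^ p := Finset.sum_nonneg fun q _ => rpow_nonneg (hg q) _
    have hmr : (1 / m * ∑ q, g q ^ p) ^ ((p - 1) / p)
        = (1 / m) ^ ((p - 1) / p) * (∑ q, g q ^ p) ^ ((p - 1) / p) :=
      Real.mul_rpow (by positivity) hΦ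
    rw [hmr] at key
    have hmm : m * (1 / m) ^ ((p - 1) / p) = m ^ (1 / p) := by
      rw [one_div, ← Real.rpow_neg_one m, ← Real.rpow_mul hm0.le]
      nth_rewrite 1 [← Real.rpow_one m]
      rw [← Real.rpow_add hm0]
      congr 1; field_simp; ring
    calc ∑ q, g q ^ (p - 1) = m * (1 / m * ∑ q, g q ^ (p - 1)) := by field_simp
      _ ≤ m * ((1 / m) ^ ((p - 1) / p) * (∑ q, g q ^ p) ^ ((p - 1) / p)) :=
          mul_le_mul_of_nonneg_left key hm0.le
      _ = m ^ (1 / p) * (∑ q, g q ^ p) ^ ((p - 1) / p) := by rw [← mul_assoc, hmm]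

lemma bern (hp : 1 ≤ p) {B a : ℝ} (hB : 0 < B) (ha : 0 ≤ a) :
    B ^ p + p * a * B ^ (p - 1) ≤ (B + a) ^ p := by
  have hd : 0 ≤ a / B := div_nonneg ha hB.le
  have h1 : (B + a) ^ p = B ^ p * (1 + a / B) ^ p := by
    rw [← Real.mul_rpow hB.le (by positivity)]
    congr 1; field_simp
  have h2 : 1 + p * (a / B) ≤ (1 + a / B) ^ p :=
    one_add_mul_self_le_rpow_one_add (by linarith) hp
  have h3 : B ^ (p - 1) = B ^ p / B := by rw [Real.rpow_sub hB, Real.rpow_one]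
  calc B ^ p + p * a * B ^ (p - 1) = B ^ p * (1 + p * (a / B)) := by
        rw [h3]; field_simp
    _ ≤ B ^ p * (1 + a / B) ^ p :=
        mul_le_mul_of_nonneg_left h2 (rpow_nonneg hB.le _)
    _ = (B + a) ^ p := h1.symm

end PB

/-- **Any-time potential bound.** For a deficit process satisfying the moment
conditions, for every `t ≥ 0`,
`(∑ q, f (z t q)) ^ (1/p) ≤ m ^ (1/p) * (4p² + 2 √e p σ² t / n)`. -/
theorem anytime_potential_bound (Q : Type*) [Fintype Q] (hm : 1 ≤ Fintype.card Q)
    (n : ℕ) (hn : 1 ≤ n) (p σ : ℝ) (hp : 1 ≤ p) (hσ : 0 ≤ σ)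
    (z : ℕ → Q → ℝ) (hproc : DeficitProcess Q n σ p z) :
    ∀ t : ℕ,
      (∑ q, potComp p (z t q)) ^ (1 / p) ≤
        (Fintype.card Q : ℝ) ^ (1 / p) *
          (4 * p ^ 2 + 2 * Real.sqrt (Real.exp 1) * p * σ ^ 2 * (t : ℝ) / (n : ℝ)) := by
  obtain ⟨hnn, hz0, hstep⟩ := hproc
  have hp0 : (0:ℝ) < p := by linarith
  have hn0 : (0:ℝ) < (n : ℝ) := by exact_mod_cast hn
  have hm0 : (0:ℝ) < (Fintype.card Q : ℝ) := by exact_mod_cast hm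
  have hsq : (0:ℝ) ≤ Real.sqrt (Real.exp 1) := Real.sqrt_nonneg _
  set m : ℝ := (Fintype.card Q : ℝ) with hmdef
  set B : ℕ → ℝ := fun t =>
    m ^ (1 / p) * (4 * p ^ 2 + 2 * Real.sqrt (Real.exp 1) * p * σ ^ 2 * (t : ℝ) / (n : ℝ))
    with hB
  have hBpos : ∀ t : ℕ, 0 < B t := by
    intro t
    apply mul_pos (Real.rpow_pos_of_pos hm0 _)
    have h1 : 0 ≤ 2 * Real.sqrt (Real.exp 1) * p * σ ^ 2 * (t : ℝ) / (n : ℝ) := by positivity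
    nlinarith
  have hΦnn : ∀ t : ℕ, (0:ℝ) ≤ ∑ q, potComp p (z t q) :=
    fun t => Finset.sum_nonneg fun q _ => Real.rpow_nonneg (PB.gpos hp _).le _
  have claim : ∀ t : ℕ, ∑ q, potComp p (z t q) ≤ (B t) ^ p := by
    intro t
    induction t with
    | zero =>
      have : ∀ q : Q, potComp p (z 0 q) = (4 * p ^ 2) ^ p := by
        intro q; rw [hz0 q]; unfold potComp; norm_num
      rw [Finset.sum_congr rfl fun q _ => this q, Finset.sum_const, Finset.card_univ,
        nsmul_eq_mul]
      have hB0 : B 0 = m ^ (1 / p) * (4 * p ^ 2) := by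
        simp [hB]
      rw [hB0, Real.mul_rpow (Real.rpow_nonneg hm0.le _) (by positivity),
        ← Real.rpow_mul hm0.le, one_div_mul_cancel hp0.ne', Real.rpow_one]
    | succ t ih =>
      obtain ⟨Δ, hΔb, hΔs, hΔq, hpot⟩ := hstep t
      set C : Q → ℝ := fun q =>
        2 * Real.sqrt (Real.exp 1) * p ^ 2 * ((z t q) ^ 2 + 4 * p ^ 2) ^ (p - 1) with hC
      have hCnn : ∀ q, 0 ≤ C q := fun q => by
        have := Real.rpow_nonneg (PB.gpos hp (z t q)).le (p - 1); positivity
      -- pointwise bound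
      have hpt : ∀ (q : Q) (k : Fin n),
          potComp p (max (z t q + Δ q k) 0) ≤
            potComp p (z t q) + PB.F' p (z t q) * Δ q k + C q * (Δ q k) ^ 2 := by
        intro q k
        have h1 : potComp p (max (z t q + Δ q k) 0) ≤ potComp p (z t q + Δ q k) := by
          unfold potComp
          apply Real.rpow_le_rpow (by positivity) _ hp0.le
          have : (max (z t q + Δ q k) 0) ^ 2 ≤ (z t q + Δ q k) ^ 2 := by
            rcases le_total (z t q + Δ q k) 0 with h | h
            · rw [max_eq_right h]; simpa using sq_nonneg (z t q + Δ q k)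
            · rw [max_eq_left h]
          linarith
        have h2 := PB.taylor_bound hp (hnn t q) (hΔb q k).1 (hΔb q k).2
        have h3 : potComp p (z t q + Δ q k) = PB.F p (z t q + Δ q k) := rfl
        have h4 : potComp p (z t q) = PB.F p (z t q) := rfl
        rw [h3] at h1
        calc potComp p (max (z t q + Δ q k) 0) ≤ PB.F p (z t q + Δ q k) := h1
          _ ≤ PB.F p (z t q) + PB.F' p (z t q) * Δ q k
              + 2 * Real.sqrt (Real.exp 1) * p ^ 2 * ((z t q) ^ 2 + 4 * p ^ 2) ^ (p - 1)
                * (Δ q k) ^ 2 := h2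
          _ = potComp p (z t q) + PB.F' p (z t q) * Δ q k + C q * (Δ q k) ^ 2 := by
              rw [h4, hC]
      -- sum over k
      have hsumk : ∀ q : Q, ∑ k, potComp p (max (z t q + Δ q k) 0) ≤
          (n : ℝ) * potComp p (z t q) + C q * σ ^ 2 := by
        intro q
        have h1 : ∑ k, potComp p (max (z t q + Δ q k) 0) ≤
            ∑ k : Fin n, (potComp p (z t q) + PB.F' p (z t q) * Δ q k + C q * (Δ q k) ^ 2) :=
          Finset.sum_le_sum fun k _ => hpt q k
        have h2 : ∑ k : Fin n, (potComp p (z t q) + PB.F' p (z t q) * Δ q k + C q * (Δ q k) ^ 2)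
            = (n : ℝ) * potComp p (z t q) + PB.F' p (z t q) * (∑ k, Δ q k)
              + C q * (∑ k, (Δ q k) ^ 2) := by
          rw [Finset.sum_add_distrib, Finset.sum_add_distrib, Finset.sum_const,
            Finset.card_univ, Fintype.card_fin, nsmul_eq_mul, ← Finset.mul_sum, ← Finset.mul_sum]
        have hF'nn : 0 ≤ PB.F' p (z t q) := by
          unfold PB.F'
          have := Real.rpow_nonneg (PB.gpos hp (z t q)).le (p - 1)
          have := hnn t q
          positivity
        have h3 : PB.F' p (z t q) * (∑ k, Δ q k) ≤ 0 := mul_nonpos_of_nonneg_of_nonpos hF'nn (hΔs q)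
        have h4 : C q * (∑ k, (Δ q k) ^ 2) ≤ C q * σ ^ 2 :=
          mul_le_mul_of_nonneg_left (hΔq q) (hCnn q)
        calc ∑ k, potComp p (max (z t q + Δ q k) 0) ≤ _ := h1
          _ = _ := h2
          _ ≤ (n : ℝ) * potComp p (z t q) + C q * σ ^ 2 := by linarith
      -- total step bound
      have hstep2 : ∑ q, potComp p (z (t + 1) q) ≤
          ∑ q, potComp p (z t q) + (σ ^ 2 / (n : ℝ)) * ∑ q, C q := by
        have h5 : ∑ k : Fin n, ∑ q, potComp p (max (z t q + Δ q k) 0)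
            = ∑ q, ∑ k : Fin n, potComp p (max (z t q + Δ q k) 0) := Finset.sum_comm
        have h6 : ∑ q, ∑ k : Fin n, potComp p (max (z t q + Δ q k) 0)
            ≤ ∑ q, ((n : ℝ) * potComp p (z t q) + C q * σ ^ 2) :=
          Finset.sum_le_sum fun q _ => hsumk q
        have h7 : ∑ q, ((n : ℝ) * potComp p (z t q) + C q * σ ^ 2)
            = (n : ℝ) * ∑ q, potComp p (z t q) + σ ^ 2 * ∑ q, C q := by
          rw [Finset.sum_add_distrib, ← Finset.mul_sum, ← Finset.sum_mul]; ring
        calc ∑ q, potComp p (z (t + 1) q)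
            ≤ (1 / (n : ℝ)) * ∑ k, ∑ q, potComp p (max (z t q + Δ q k) 0) := hpot
          _ ≤ (1 / (n : ℝ)) * ((n : ℝ) * ∑ q, potComp p (z t q) + σ ^ 2 * ∑ q, C q) := by
              apply mul_le_mul_of_nonneg_left _ (by positivity)
              rw [h7] at h6; rw [h5]; exact h6
          _ = ∑ q, potComp p (z t q) + (σ ^ 2 / (n : ℝ)) * ∑ q, C q := by
              field_simp
      -- Hölder
      have hhold : ∑ q, C q ≤ 2 * Real.sqrt (Real.exp 1) * p ^ 2 * (m ^ (1 / p)
          * (∑ q, potComp p (z t q)) ^ ((p - 1) / p)) := by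
        have h8 : ∑ q, C q = 2 * Real.sqrt (Real.exp 1) * p ^ 2
            * ∑ q, ((z t q) ^ 2 + 4 * p ^ 2) ^ (p - 1) := by
          rw [Finset.mul_sum]
        rw [h8]
        apply mul_le_mul_of_nonneg_left _ (by positivity)
        have := PB.holder hm hp (fun q => (z t q) ^ 2 + 4 * p ^ 2)
          (fun q => (PB.gpos hp (z t q)).le)
        exact this
      have hpow : (∑ q, potComp p (z t q)) ^ ((p - 1) / p) ≤ (B t) ^ (p - 1) := by
        have h9 : (∑ q, potComp p (z t q)) ^ ((p - 1) / p) ≤ ((B t) ^ p) ^ ((p - 1) / p) :=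
          Real.rpow_le_rpow (hΦnn t) ih (div_nonneg (by linarith) hp0.le)
        rwa [← Real.rpow_mul (hBpos t).le, mul_div_cancel₀ _ hp0.ne'] at h9
      -- combine
      set a : ℝ := 2 * Real.sqrt (Real.exp 1) * p * σ ^ 2 * m ^ (1 / p) / (n : ℝ) with ha
      have hann : 0 ≤ a := div_nonneg
        (mul_nonneg (by positivity) (Real.rpow_nonneg hm0.le _)) hn0.le
      have hfinal : ∑ q, potComp p (z (t + 1) q) ≤ (B t) ^ p + p * a * (B t) ^ (p - 1) := by
        have hmr : (0:ℝ) ≤ m ^ (1 / p) := Real.rpow_nonneg hm0.le _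
        have hcoef : (0:ℝ) ≤ σ ^ 2 / (n : ℝ) * (2 * Real.sqrt (Real.exp 1) * p ^ 2 * m ^ (1 / p)) :=
          mul_nonneg (by positivity) (mul_nonneg (by positivity) hmr)
        have h10 : (σ ^ 2 / (n : ℝ)) * ∑ q, C q ≤ p * a * (B t) ^ (p - 1) := by
          calc (σ ^ 2 / (n : ℝ)) * ∑ q, C q
              ≤ σ ^ 2 / (n : ℝ) * (2 * Real.sqrt (Real.exp 1) * p ^ 2 * (m ^ (1 / p)
                * (∑ q, potComp p (z t q)) ^ ((p - 1) / p))) :=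
              mul_le_mul_of_nonneg_left hhold (by positivity)
            _ = σ ^ 2 / (n : ℝ) * (2 * Real.sqrt (Real.exp 1) * p ^ 2 * m ^ (1 / p))
                * (∑ q, potComp p (z t q)) ^ ((p - 1) / p) := by ring
            _ ≤ σ ^ 2 / (n : ℝ) * (2 * Real.sqrt (Real.exp 1) * p ^ 2 * m ^ (1 / p))
                * (B t) ^ (p - 1) := mul_le_mul_of_nonneg_left hpow hcoef
            _ = p * a * (B t) ^ (p - 1) := by rw [ha]; ring
        have := hstep2
        calc ∑ q, potComp p (z (t + 1) q)
            ≤ ∑ q, potComp p (z t q) + (σ ^ 2 / (n : ℝ)) * ∑ q, C q := hstep2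
          _ ≤ (B t) ^ p + p * a * (B t) ^ (p - 1) := by
              have := ih; linarith
      have hB1 : B t + a = B (t + 1) := by
        rw [hB, ha]
        push_cast
        ring
      calc ∑ q, potComp p (z (t + 1) q) ≤ (B t) ^ p + p * a * (B t) ^ (p - 1) := hfinal
        _ ≤ (B t + a) ^ p := PB.bern hp (hBpos t) hann
        _ = (B (t + 1)) ^ p := by rw [hB1]
  intro t
  have h := Real.rpow_le_rpow (hΦnn t) (claim t) (by positivity : (0:ℝ) ≤ 1 / p)
  rwa [← Real.rpow_mul (hBpos t).le, mul_one_div_cancel hp0.ne', Real.rpow_one] at h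
end

section
/- Let Q be a finite set of size m ≥ 1, n ≥ 1 an integer, p ≥ 1 and σ ≥ 0 reals, and let (z^t)_{t≥0} be a deficit process on Q satisfying the potential-rule moment conditions with parameters n, σ², p. Then for every t ≥ 0 and every real c > 0, the number of q ∈ Q with z^t_q > c is at most m · ((4p² + 2√e · p · σ² · t / n) / c²)^p. -/
open Finset

lemma sqrt_exp_one : Real.sqrt (Real.exp 1) = Real.exp (1/2) := by
  have h : Real.exp 1 = Real.exp (1/2) * Real.exp (1/2) := by rw [← Real.exp_add]; norm_num
  rw [h, Real.sqrt_mul_self (Real.exp_pos _).le]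

lemma key_Bbound {p z : ℝ} (hp : 1 ≤ p) (hz : 0 ≤ z) {s : ℝ} (hs1 : -1 ≤ s) (hs2 : s ≤ 1) :
    ((z + s)^2 + 4*p^2) ^ (p-1) ≤ Real.sqrt (Real.exp 1) * (z^2 + 4*p^2) ^ (p-1) := by
  set A : ℝ := z^2 + 4*p^2 with hA_def
  have hA : 0 < A := by positivity
  have hu : 0 ≤ (2*z+1)/A := by positivity
  have hBle : (z + s)^2 + 4*p^2 ≤ A * (1 + (2*z+1)/A) := by
    rw [mul_add, mul_one, mul_div_cancel₀ _ hA.ne']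
    simp only [hA_def]; nlinarith
  calc ((z + s)^2 + 4*p^2) ^ (p-1) ≤ (A * (1 + (2*z+1)/A)) ^ (p-1) :=
        Real.rpow_le_rpow (by positivity) hBle (by linarith)
    _ = A ^ (p-1) * (1 + (2*z+1)/A) ^ (p-1) := by
        rw [Real.mul_rpow hA.le (by linarith)]
    _ ≤ A ^ (p-1) * Real.sqrt (Real.exp 1) := by
        apply mul_le_mul_of_nonneg_left _ (Real.rpow_nonneg hA.le _)
        have h1 : (1 + (2*z+1)/A) ^ (p-1) ≤ (Real.exp ((2*z+1)/A)) ^ (p-1) :=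
          Real.rpow_le_rpow (by linarith) (by simpa [add_comm] using Real.add_one_le_exp ((2*z+1)/A)) (by linarith)
        have h2 : (Real.exp ((2*z+1)/A)) ^ (p-1) = Real.exp ((2*z+1)/A * (p-1)) := by
          rw [← Real.exp_one_rpow ((2*z+1)/A), ← Real.rpow_mul (Real.exp_pos 1).le,
            Real.exp_one_rpow]
        have h3 : (2*z+1)/A * (p-1) ≤ 1/2 := by
          rw [div_mul_eq_mul_div, div_le_iff₀ hA]
          simp only [hA_def]; nlinarith [sq_nonneg (z - 2*(p-1))]
        calc (1 + (2*z+1)/A) ^ (p-1) ≤ Real.exp ((2*z+1)/A * (p-1)) := h1.trans_eq h2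
          _ ≤ Real.exp (1/2) := Real.exp_le_exp.2 h3
          _ = Real.sqrt (Real.exp 1) := sqrt_exp_one.symm
    _ = Real.sqrt (Real.exp 1) * A ^ (p-1) := mul_comm _ _

lemma hasDerivAt_B (p z : ℝ) (s : ℝ) :
    HasDerivAt (fun s => (z + s)^2 + 4*p^2) (2*(z+s)) s := by
  have h1 : HasDerivAt (fun s : ℝ => z + s) 1 s := (hasDerivAt_id s).const_add z
  simpa using (h1.pow 2).add_const (4*p^2)

lemma hasDerivAt_g {p z : ℝ} (hp : 1 ≤ p) (s : ℝ) :
    HasDerivAt (fun s => ((z + s)^2 + 4*p^2) ^ p)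
      (p * ((z + s)^2 + 4*p^2) ^ (p-1) * (2*(z+s))) s := by
  have hB : ((z + s)^2 + 4*p^2) ≠ 0 := by positivity
  exact (Real.hasDerivAt_rpow_const (p := p) (Or.inl hB)).comp s (hasDerivAt_B p z s)

lemma hasDerivAt_g' {p z : ℝ} (hp : 1 ≤ p) (s : ℝ) :
    HasDerivAt (fun s => p * ((z + s)^2 + 4*p^2) ^ (p-1) * (2*(z+s)))
      (p * ((p-1) * ((z + s)^2 + 4*p^2) ^ (p-1-1) * (2*(z+s))) * (2*(z+s))
        + p * ((z + s)^2 + 4*p^2) ^ (p-1) * 2) s := by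
  have hB : ((z + s)^2 + 4*p^2) ≠ 0 := by positivity
  have h1 : HasDerivAt (fun s => ((z + s)^2 + 4*p^2) ^ (p-1))
      ((p-1) * ((z + s)^2 + 4*p^2) ^ (p-1-1) * (2*(z+s))) s :=
    by have := (Real.hasDerivAt_rpow_const (p := p-1) (Or.inl hB)).comp s (hasDerivAt_B p z s); exact this
  have h2 : HasDerivAt (fun s : ℝ => 2*(z+s)) 2 s := by
    simpa using ((hasDerivAt_id s).const_add z).const_mul 2
  simpa [mul_assoc, Pi.mul_def] using ((h1.const_mul p).mul h2)

-- second derivative bound on [-1,1]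
lemma D2_bound {p z : ℝ} (hp : 1 ≤ p) (hz : 0 ≤ z) {s : ℝ} (hs1 : -1 ≤ s) (hs2 : s ≤ 1) :
    p * ((p-1) * ((z + s)^2 + 4*p^2) ^ (p-1-1) * (2*(z+s))) * (2*(z+s))
        + p * ((z + s)^2 + 4*p^2) ^ (p-1) * 2
      ≤ (4*p^2 - 2*p) * Real.sqrt (Real.exp 1) * (z^2 + 4*p^2) ^ (p-1) := by
  set B : ℝ := (z + s)^2 + 4*p^2 with hB_def
  have hB : 0 < B := by positivity
  have hsq : (z+s)^2 ≤ B := by simp only [hB_def]; nlinarith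
  have hBp2 : (0:ℝ) ≤ B ^ (p-1-1) := Real.rpow_nonneg hB.le _
  have hmul : B ^ (p-1-1) * B = B ^ (p-1) := by
    rw [← Real.rpow_add_one hB.ne' (p-1-1)]; ring_nf
  have h1 : (2*(z+s)) * (2*(z+s)) * B ^ (p-1-1) ≤ 4 * B ^ (p-1) := by
    have : (2*(z+s)) * (2*(z+s)) = 4 * (z+s)^2 := by ring
    rw [this]
    calc 4 * (z+s)^2 * B ^ (p-1-1) ≤ 4 * B * B ^ (p-1-1) := by nlinarith
      _ = 4 * B ^ (p-1) := by rw [mul_assoc, mul_comm B, hmul]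
  have h2 : B ^ (p-1) ≤ Real.sqrt (Real.exp 1) * (z^2 + 4*p^2) ^ (p-1) :=
    key_Bbound hp hz hs1 hs2
  have hpp : 0 ≤ p * (p-1) := by nlinarith
  have h3 : (4*p^2 - 2*p) * B ^ (p-1) ≤ (4*p^2-2*p) * (Real.sqrt (Real.exp 1) * (z^2 + 4*p^2) ^ (p-1)) :=
    mul_le_mul_of_nonneg_left h2 (by nlinarith)
  calc p * ((p-1) * B ^ (p-1-1) * (2*(z+s))) * (2*(z+s)) + p * B ^ (p-1) * 2
      = p * (p-1) * ((2*(z+s)) * (2*(z+s)) * B ^ (p-1-1)) + 2 * p * B ^ (p-1) := by ring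
    _ ≤ p * (p-1) * (4 * B ^ (p-1)) + 2 * p * B ^ (p-1) := by
        have := mul_le_mul_of_nonneg_left h1 hpp
        linarith
    _ = (4*p^2 - 2*p) * B ^ (p-1) := by ring
    _ ≤ _ := by rw [mul_assoc]; exact h3

lemma key_taylor {p z : ℝ} (hp : 1 ≤ p) (hz : 0 ≤ z) {Δ : ℝ} (hΔ1 : -1 ≤ Δ) (hΔ2 : Δ ≤ 1) :
    ((z + Δ)^2 + 4*p^2) ^ p ≤ (z^2 + 4*p^2) ^ p
      + p * (z^2 + 4*p^2) ^ (p-1) * (2*z) * Δ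
      + ((2*p^2 - p) * Real.sqrt (Real.exp 1) * (z^2 + 4*p^2) ^ (p-1)) * Δ^2 := by
  set A : ℝ := z^2 + 4*p^2 with hA_def
  set G : ℝ := (4*p^2 - 2*p) * Real.sqrt (Real.exp 1) * A ^ (p-1) with hG_def
  set g : ℝ → ℝ := fun s => ((z + s)^2 + 4*p^2) ^ p with hg_def
  set φ : ℝ → ℝ := fun s => A ^ p + p * A ^ (p-1) * (2*z) * s + G * s^2 / 2 - g s with hφ_def
  set φ' : ℝ → ℝ := fun s => p * A ^ (p-1) * (2*z) + G * s
      - p * ((z + s)^2 + 4*p^2) ^ (p-1) * (2*(z+s)) with hφ'_def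
  have hdφ : ∀ s, HasDerivAt φ (φ' s) s := by
    intro s
    have h1 : HasDerivAt (fun s : ℝ => A ^ p + p * A ^ (p-1) * (2*z) * s + G * s^2 / 2)
        (p * A ^ (p-1) * (2*z) + G * s) s := by
      have ha : HasDerivAt (fun s : ℝ => p * A ^ (p-1) * (2*z) * s) (p * A ^ (p-1) * (2*z)) s := by
        simpa using (hasDerivAt_id s).const_mul (p * A ^ (p-1) * (2*z))
      have hb : HasDerivAt (fun s : ℝ => G * s^2 / 2) (G * s) s := by
        have := ((hasDerivAt_pow 2 s).const_mul G).div_const 2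
        simpa [mul_comm, mul_assoc, mul_div_assoc] using this
        -- deriv: G * (2 * s^1) / 2 = G * s
      have := (ha.const_add (A ^ p)).add hb
      exact this
    have := h1.sub (hasDerivAt_g (z := z) hp s)
    exact this
  have hdφ' : ∀ s, HasDerivAt φ'
      (G - (p * ((p-1) * ((z + s)^2 + 4*p^2) ^ (p-1-1) * (2*(z+s))) * (2*(z+s))
        + p * ((z + s)^2 + 4*p^2) ^ (p-1) * 2)) s := by
    intro s
    have h1 : HasDerivAt (fun s : ℝ => p * A ^ (p-1) * (2*z) + G * s) G s := by
      simpa using ((hasDerivAt_id s).const_mul G).const_add (p * A ^ (p-1) * (2*z))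
    exact h1.sub (hasDerivAt_g' hp s)
  -- φ' is monotone on [-1,1]
  have hmono : MonotoneOn φ' (Set.Icc (-1:ℝ) 1) := by
    apply monotoneOn_of_deriv_nonneg (convex_Icc _ _)
    · exact fun s _ => (hdφ' s).continuousAt.continuousWithinAt
    · exact fun s _ => (hdφ' s).differentiableAt.differentiableWithinAt
    · intro s hs
      rw [interior_Icc] at hs
      rw [(hdφ' s).deriv]
      have := D2_bound hp hz (le_of_lt hs.1) (le_of_lt hs.2)
      simp only [hG_def, hA_def]
      linarith
  have hφ'0 : φ' 0 = 0 := by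
    simp only [hφ'_def, hA_def]
    ring_nf
  have hφ0 : φ 0 = 0 := by
    simp only [hφ_def, hg_def]
    simp [hA_def]
  -- φ ≥ 0 on [-1,1]
  have hfinal : 0 ≤ φ Δ := by
    rcases le_total 0 Δ with h | h
    · have hmono2 : MonotoneOn φ (Set.Icc (0:ℝ) 1) := by
        apply monotoneOn_of_deriv_nonneg (convex_Icc _ _)
        · exact fun s _ => (hdφ s).continuousAt.continuousWithinAt
        · exact fun s _ => (hdφ s).differentiableAt.differentiableWithinAt
        · intro s hs
          rw [interior_Icc] at hs
          rw [(hdφ s).deriv]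
          have h0 : φ' 0 ≤ φ' s := hmono (by constructor <;> norm_num)
            (⟨by linarith [hs.1], hs.2.le⟩) hs.1.le
          linarith [hφ'0 ▸ h0]
      have := hmono2 ⟨le_refl 0, by norm_num⟩ ⟨h, hΔ2⟩ h
      linarith [hφ0 ▸ this]
    · have hanti : AntitoneOn φ (Set.Icc (-1:ℝ) 0) := by
        apply antitoneOn_of_deriv_nonpos (convex_Icc _ _)
        · exact fun s _ => (hdφ s).continuousAt.continuousWithinAt
        · exact fun s _ => (hdφ s).differentiableAt.differentiableWithinAt
        · intro s hs
          rw [interior_Icc] at hs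
          rw [(hdφ s).deriv]
          have h0 : φ' s ≤ φ' 0 := hmono (⟨hs.1.le, by linarith [hs.2]⟩)
            (by constructor <;> norm_num) hs.2.le
          linarith [hφ'0 ▸ h0]
      have := hanti ⟨hΔ1, h⟩ ⟨by norm_num, by norm_num⟩ h
      linarith [hφ0 ▸ this]
  have : g Δ ≤ A ^ p + p * A ^ (p-1) * (2*z) * Δ + G * Δ^2 / 2 := by
    simp only [hφ_def] at hfinal; linarith
  calc ((z + Δ)^2 + 4*p^2) ^ p = g Δ := rfl
    _ ≤ A ^ p + p * A ^ (p-1) * (2*z) * Δ + G * Δ^2 / 2 := this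
    _ = A ^ p + p * A ^ (p-1) * (2*z) * Δ + ((2*p^2 - p) * Real.sqrt (Real.exp 1) * A ^ (p-1)) * Δ^2 := by
        rw [hG_def]; ring
-- Bernoulli consequence
lemma bern_aux {p A C : ℝ} (hp : 1 ≤ p) (hA : 0 < A) (hC : 0 ≤ C) :
    A ^ p + p * A ^ (p-1) * C ≤ (A + C) ^ p := by
  have h := one_add_mul_self_le_rpow_one_add (s := C/A) (le_trans (by norm_num) (by positivity : (0:ℝ) ≤ C/A)) hp
  have hAp : 0 < A ^ p := Real.rpow_pos_of_pos hA p
  have h2 : A ^ p * (1 + p * (C/A)) ≤ A ^ p * (1 + C/A) ^ p :=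
    mul_le_mul_of_nonneg_left h hAp.le
  have h3 : A ^ p * (1 + C/A) ^ p = (A + C) ^ p := by
    rw [← Real.mul_rpow hA.le (by positivity)]
    congr 1
    field_simp
  have h4 : A ^ p * (1 + p * (C/A)) = A ^ p + p * A ^ (p-1) * C := by
    have : A ^ (p-1) = A ^ p / A := Real.rpow_sub_one hA.ne' p
    rw [this]; field_simp
  linarith [h4 ▸ h3 ▸ h2]

lemma step_avg {p σ : ℝ} (hp : 1 ≤ p) (hσ : 0 ≤ σ) {n : ℕ} (hn : 1 ≤ n)
    {z : ℝ} (hz : 0 ≤ z) {Δ : Fin n → ℝ}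
    (hΔb : ∀ k, -1 ≤ Δ k ∧ Δ k ≤ 1) (hΔs : ∑ k, Δ k ≤ 0) (hΔ2 : ∑ k, (Δ k)^2 ≤ σ^2) :
    (1/(n:ℝ)) * ∑ k, potComp p (max (z + Δ k) 0)
      ≤ (z^2 + 4*p^2 + 2*Real.sqrt (Real.exp 1)*p*σ^2/(n:ℝ)) ^ p := by
  have hn0 : (0:ℝ) < n := by exact_mod_cast hn
  set A : ℝ := z^2 + 4*p^2 with hA_def
  have hA : 0 < A := by positivity
  set e2 : ℝ := Real.sqrt (Real.exp 1) with he2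
  have he2p : 0 ≤ e2 := Real.sqrt_nonneg _
  set C : ℝ := 2*e2*p*σ^2/(n:ℝ) with hC_def
  have hC : 0 ≤ C := by positivity
  have hK : 0 ≤ (2*p^2 - p) * e2 * A ^ (p-1) := by
    have : (0:ℝ) ≤ 2*p^2 - p := by nlinarith
    positivity
  -- pointwise bound
  have hpt : ∀ k, potComp p (max (z + Δ k) 0) ≤
      A ^ p + p * A ^ (p-1) * (2*z) * Δ k + ((2*p^2 - p) * e2 * A ^ (p-1)) * (Δ k)^2 := by
    intro k
    have h1 : potComp p (max (z + Δ k) 0) ≤ ((z + Δ k)^2 + 4*p^2) ^ p := by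
      have hmax : (max (z + Δ k) 0)^2 ≤ (z + Δ k)^2 := by
        rcases le_total (z + Δ k) 0 with h | h
        · rw [max_eq_right h]; simpa using sq_nonneg (z + Δ k)
        · rw [max_eq_left h]
      unfold potComp
      exact Real.rpow_le_rpow (by positivity) (by linarith) (by linarith)
    exact h1.trans (key_taylor hp hz (hΔb k).1 (hΔb k).2)
  have hsum : ∑ k, potComp p (max (z + Δ k) 0) ≤
      (n:ℝ) * A ^ p + p * A ^ (p-1) * (2*z) * (∑ k, Δ k)
        + ((2*p^2 - p) * e2 * A ^ (p-1)) * (∑ k, (Δ k)^2) := by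
    calc ∑ k, potComp p (max (z + Δ k) 0)
        ≤ ∑ k : Fin n, (A ^ p + p * A ^ (p-1) * (2*z) * Δ k
            + ((2*p^2 - p) * e2 * A ^ (p-1)) * (Δ k)^2) := Finset.sum_le_sum fun k _ => hpt k
      _ = (n:ℝ) * A ^ p + p * A ^ (p-1) * (2*z) * (∑ k, Δ k)
            + ((2*p^2 - p) * e2 * A ^ (p-1)) * (∑ k, (Δ k)^2) := by
          rw [Finset.sum_add_distrib, Finset.sum_add_distrib, ← Finset.mul_sum, ← Finset.mul_sum]
          simp [Finset.sum_const, Finset.card_univ, mul_comm]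
  have hlin : p * A ^ (p-1) * (2*z) * (∑ k, Δ k) ≤ 0 := by
    apply mul_nonpos_of_nonneg_of_nonpos _ hΔs
    have : 0 ≤ A ^ (p-1) := Real.rpow_nonneg hA.le _
    positivity
  have hquad : ((2*p^2 - p) * e2 * A ^ (p-1)) * (∑ k, (Δ k)^2) ≤
      ((2*p^2 - p) * e2 * A ^ (p-1)) * σ^2 := mul_le_mul_of_nonneg_left hΔ2 hK
  have hstep : (1/(n:ℝ)) * ∑ k, potComp p (max (z + Δ k) 0) ≤ A ^ p + p * A ^ (p-1) * C := by
    have h5 : ∑ k, potComp p (max (z + Δ k) 0) ≤ (n:ℝ) * A ^ p + ((2*p^2 - p) * e2 * A ^ (p-1)) * σ^2 := by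
      linarith
    rw [div_mul_eq_mul_div, one_mul, div_le_iff₀ hn0] at *
    calc ∑ k, potComp p (max (z + Δ k) 0) ≤ (n:ℝ) * A ^ p + ((2*p^2 - p) * e2 * A ^ (p-1)) * σ^2 := h5
      _ ≤ (A ^ p + p * A ^ (p-1) * C) * n := by
          rw [hC_def]
          have hApos : 0 ≤ A ^ (p-1) := Real.rpow_nonneg hA.le _
          have : ((2*p^2 - p) * e2 * A ^ (p-1)) * σ^2 ≤ (2*p^2) * e2 * A ^ (p-1) * σ^2 := by
            nlinarith [mul_nonneg (mul_nonneg he2p hApos) (sq_nonneg σ)]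
          field_simp
          nlinarith [this]
  exact hstep.trans (bern_aux hp hA hC)

lemma mink_step {Q : Type*} [Fintype Q] {p C S : ℝ} (hp : 1 ≤ p) (hC : 0 ≤ C) (hS : 0 ≤ S)
    (a : Q → ℝ) (ha : ∀ q, 0 ≤ a q)
    (h : ∑ q, a q ^ p ≤ (Fintype.card Q : ℝ) * S ^ p) :
    ∑ q, (a q + C) ^ p ≤ (Fintype.card Q : ℝ) * (S + C) ^ p := by
  have hp0 : 0 < p := by linarith
  set m : ℝ := (Fintype.card Q : ℝ) with hm
  have hm0 : 0 ≤ m := by positivity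
  have hL : (∑ q, (a q + C) ^ p) ^ (1/p) ≤
      (∑ q, a q ^ p) ^ (1/p) + (∑ _q : Q, C ^ p) ^ (1/p) :=
    Real.Lp_add_le_of_nonneg (s := Finset.univ) (f := a) (g := fun _ => C) hp (fun q _ => ha q) (fun _ _ => hC)
  have hsum1 : (0:ℝ) ≤ ∑ q, a q ^ p := Finset.sum_nonneg fun q _ => Real.rpow_nonneg (ha q) p
  have hCp : (∑ _q : Q, C ^ p) = m * C ^ p := by
    rw [Finset.sum_const, Finset.card_univ, nsmul_eq_mul, hm]
  have h1 : (∑ q, a q ^ p) ^ (1/p) ≤ m ^ (1/p) * S := by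
    calc (∑ q, a q ^ p) ^ (1/p) ≤ (m * S ^ p) ^ (1/p) :=
          Real.rpow_le_rpow hsum1 h (by positivity)
      _ = m ^ (1/p) * S := by
          rw [Real.mul_rpow hm0 (Real.rpow_nonneg hS p), one_div,
            Real.rpow_rpow_inv hS hp0.ne']
  have h2 : (∑ _q : Q, C ^ p) ^ (1/p) = m ^ (1/p) * C := by
    rw [hCp, Real.mul_rpow hm0 (Real.rpow_nonneg hC p), one_div,
      Real.rpow_rpow_inv hC hp0.ne']
  have h3 : (∑ q, (a q + C) ^ p) ^ (1/p) ≤ m ^ (1/p) * (S + C) := by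
    rw [mul_add]
    exact hL.trans (by linarith)
  have hsum2 : (0:ℝ) ≤ ∑ q, (a q + C) ^ p :=
    Finset.sum_nonneg fun q _ => Real.rpow_nonneg (by linarith [ha q]) p
  have h4 : ((∑ q, (a q + C) ^ p) ^ (1/p)) ^ p ≤ (m ^ (1/p) * (S + C)) ^ p :=
    Real.rpow_le_rpow (Real.rpow_nonneg hsum2 _) h3 hp0.le
  calc ∑ q, (a q + C) ^ p = ((∑ q, (a q + C) ^ p) ^ (1/p)) ^ p := by
        rw [one_div, Real.rpow_inv_rpow hsum2 hp0.ne']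
    _ ≤ (m ^ (1/p) * (S + C)) ^ p := h4
    _ = m * (S + C) ^ p := by
        rw [Real.mul_rpow (Real.rpow_nonneg hm0 _) (by linarith), one_div,
          Real.rpow_inv_rpow hm0 hp0.ne']

lemma potential_bound {Q : Type*} [Fintype Q]
    {n : ℕ} (hn : 1 ≤ n) {p σ : ℝ} (hp : 1 ≤ p) (hσ : 0 ≤ σ)
    {z : ℕ → Q → ℝ} (hproc : DeficitProcess Q n σ p z) (t : ℕ) :
    ∑ q, potComp p (z t q) ≤ (Fintype.card Q : ℝ) *
      (4*p^2 + (2*Real.sqrt (Real.exp 1)*p*σ^2/(n:ℝ)) * t) ^ p := by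
  obtain ⟨hznn, hz0, hstep⟩ := hproc
  set C : ℝ := 2*Real.sqrt (Real.exp 1)*p*σ^2/(n:ℝ) with hC_def
  have hn0 : (0:ℝ) < n := by exact_mod_cast hn
  have hC : 0 ≤ C := by
    have := Real.sqrt_nonneg (Real.exp 1); positivity
  induction t with
  | zero =>
      simp only [Nat.cast_zero, mul_zero, add_zero]
      have : ∀ q : Q, potComp p (z 0 q) = (4*p^2) ^ p := by
        intro q; rw [hz0 q]; simp [potComp]
      rw [Finset.sum_congr rfl (fun q _ => this q), Finset.sum_const, Finset.card_univ,
        nsmul_eq_mul]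
  | succ t ih =>
      obtain ⟨Δ, hΔb, hΔs, hΔ2, hpot⟩ := hstep t
      have h1 : ∑ q, potComp p (z (t+1) q) ≤
          ∑ q, ((1/(n:ℝ)) * ∑ k, potComp p (max (z t q + Δ q k) 0)) := by
        rw [← Finset.mul_sum, Finset.sum_comm]
        exact hpot
      have h2 : ∀ q : Q, (1/(n:ℝ)) * ∑ k, potComp p (max (z t q + Δ q k) 0)
          ≤ ((z t q)^2 + 4*p^2 + C) ^ p := fun q =>
        step_avg hp hσ hn (hznn t q) (hΔb q) (hΔs q) (hΔ2 q)
      have h3 : ∑ q, potComp p (z (t+1) q) ≤ ∑ q, (((z t q)^2 + 4*p^2) + C) ^ p :=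
        h1.trans (Finset.sum_le_sum fun q _ => (h2 q).trans_eq (by ring_nf))
      have h4 : ∑ q, (((z t q)^2 + 4*p^2) + C) ^ p ≤
          (Fintype.card Q : ℝ) * ((4*p^2 + C * t) + C) ^ p := by
        apply mink_step hp hC (by positivity) (fun q => (z t q)^2 + 4*p^2)
          (fun q => by positivity)
        exact ih
      have h5 : (4*p^2 + C * (t:ℕ)) + C = 4*p^2 + C * ((t:ℕ)+1) := by ring
      calc ∑ q, potComp p (z (t+1) q) ≤ (Fintype.card Q : ℝ) * ((4*p^2 + C * t) + C) ^ p :=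
            h3.trans h4
        _ = (Fintype.card Q : ℝ) * (4*p^2 + C * ((t:ℕ)+1:ℝ)) ^ p := by rw [h5]
        _ = (Fintype.card Q : ℝ) * (4*p^2 + C * ((t+1 : ℕ):ℝ)) ^ p := by push_cast; ring_nf

/-- **Few `c`-disappointed variables.** For a deficit process satisfying the
moment conditions, at any time `t` and for every `c > 0`, the number of quality
variables with deficit exceeding `c` is at most
`m * ((4p² + 2 √e p σ² t / n) / c²) ^ p`. -/
theorem few_disappointed (Q : Type*) [Fintype Q] (hm : 1 ≤ Fintype.card Q)
    (n : ℕ) (hn : 1 ≤ n) (p σ : ℝ) (hp : 1 ≤ p) (hσ : 0 ≤ σ)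
    (z : ℕ → Q → ℝ) (hproc : DeficitProcess Q n σ p z) :
    ∀ t : ℕ, ∀ c : ℝ, 0 < c →
      (({q : Q | c < z t q}.ncard : ℝ)) ≤
        (Fintype.card Q : ℝ) *
          ((4 * p ^ 2 + 2 * Real.sqrt (Real.exp 1) * p * σ ^ 2 * (t : ℝ) / (n : ℝ)) / c ^ 2) ^ p := by
  intro t c hc
  classical
  have hn0 : (0:ℝ) < n := by exact_mod_cast hn
  set X : ℝ := 4 * p ^ 2 + 2 * Real.sqrt (Real.exp 1) * p * σ ^ 2 * (t : ℝ) / (n : ℝ) with hX_def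
  have hXeq : X = 4*p^2 + (2*Real.sqrt (Real.exp 1)*p*σ^2/(n:ℝ)) * t := by
    rw [hX_def]; ring
  have hX : 0 ≤ X := by
    rw [hXeq]
    have h1 : 0 ≤ Real.sqrt (Real.exp 1) := Real.sqrt_nonneg _
    have h2 : (0:ℝ) ≤ (t:ℝ) := Nat.cast_nonneg t
    positivity
  have hpot := potential_bound hn hp hσ hproc t
  rw [← hXeq] at hpot
  -- ncard as filter card
  set F : Finset Q := Finset.univ.filter (fun q => c < z t q) with hF
  have hncard : ({q : Q | c < z t q}.ncard : ℝ) = (F.card : ℝ) := by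
    congr 1
    rw [Set.ncard_eq_toFinset_card']
    congr 1
    ext q
    simp [hF]
  -- Markov
  have hmark : (F.card : ℝ) * (c^2) ^ p ≤ ∑ q, potComp p (z t q) := by
    have h1 : ∀ q ∈ F, (c^2) ^ p ≤ potComp p (z t q) := by
      intro q hq
      have hq' : c < z t q := by simpa [hF] using hq
      unfold potComp
      apply Real.rpow_le_rpow (by positivity) _ (by linarith)
      nlinarith [hproc.1 t q]
    calc (F.card : ℝ) * (c^2) ^ p = ∑ _q ∈ F, (c^2) ^ p := by
          rw [Finset.sum_const, nsmul_eq_mul]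
      _ ≤ ∑ q ∈ F, potComp p (z t q) := Finset.sum_le_sum h1
      _ ≤ ∑ q, potComp p (z t q) := by
          apply Finset.sum_le_sum_of_subset_of_nonneg (Finset.subset_univ F)
          intro q _ _
          unfold potComp
          positivity
  have hc2p : (0:ℝ) < (c^2) ^ p := Real.rpow_pos_of_pos (by positivity) p
  have hfinal : (F.card : ℝ) ≤ (Fintype.card Q : ℝ) * X ^ p / (c^2) ^ p := by
    rw [le_div_iff₀ hc2p]
    exact hmark.trans hpot
  rw [hncard]
  calc (F.card : ℝ) ≤ (Fintype.card Q : ℝ) * X ^ p / (c^2) ^ p := hfinal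
    _ = (Fintype.card Q : ℝ) * (X / c^2) ^ p := by
        rw [Real.div_rpow hX (by positivity)]; ring
end

section
/- Let Q be a finite set of size m ≥ 2, n ≥ 1 an integer, p ≥ 1 and σ ≥ 0 reals, and let (z^t)_{t≥0} be a deficit process on Q satisfying the potential-rule moment conditions with parameters n, σ², p. Define, for each t ≥ 0, c_t := m^{1/p} · √(4p² + 2√e · p · σ² · t / n). Then for every t ≥ 0 and every q ∈ Q one has z^t_q ≤ c_t; that is, no quality variable is c_t-disappointed at any time. -/
open Finset

namespace PerpetualFairness

open Real

/-- First derivative of the potential component. -/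
noncomputable def f1 (p u : ℝ) : ℝ := 2*p*u*(u^2+4*p^2)^(p-1)

/-- Second derivative of the potential component. -/
noncomputable def f2 (p u : ℝ) : ℝ := 2*p*(u^2+4*p^2)^(p-1) + 4*p*(p-1)*u^2*(u^2+4*p^2)^(p-2)

lemma base_pos {p : ℝ} (hp : 1 ≤ p) (u : ℝ) : 0 < u^2 + 4*p^2 := by
  nlinarith [sq_nonneg u]

lemma hasDerivAt_base (p u : ℝ) : HasDerivAt (fun v : ℝ => v^2 + 4*p^2) (2*u) u := by
  simpa using ((hasDerivAt_pow 2 u).add_const (4*p^2))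

lemma hasDerivAt_pot {p : ℝ} (hp : 1 ≤ p) (u : ℝ) :
    HasDerivAt (fun v : ℝ => (v^2+4*p^2)^p) (f1 p u) u := by
  have h := (hasDerivAt_base p u).rpow_const (p := p) (Or.inl (base_pos hp u).ne')
  convert h using 1
  unfold f1; ring

lemma hasDerivAt_f1 {p : ℝ} (hp : 1 ≤ p) (u : ℝ) :
    HasDerivAt (f1 p) (f2 p u) u := by
  have h1 : HasDerivAt (fun v : ℝ => 2*p*v) (2*p) u := by
    simpa using (hasDerivAt_id u).const_mul (2*p)
  have h2 := (hasDerivAt_base p u).rpow_const (p := p-1) (Or.inl (base_pos hp u).ne')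
  have h := h1.mul h2
  refine h.congr_deriv ?_
  have : p - 1 - 1 = p - 2 := by ring
  rw [this]
  unfold f2; ring

lemma expo_bound {p z : ℝ} (hp : 1 ≤ p) (hz : 0 ≤ z) :
    ((z+1)^2+4*p^2)^(p-1) ≤ Real.sqrt (exp 1) * (z^2+4*p^2)^(p-1) := by
  set w := z^2+4*p^2 with hw
  set y := (z+1)^2+4*p^2 with hy
  have hwpos : 0 < w := base_pos hp z
  have hypos : 0 < y := base_pos hp (z+1)
  have key : (p-1)*(2*z+1) ≤ w/2 := by
    have := sq_nonneg (z - 2*(p-1))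
    nlinarith
  have hlog : log y ≤ log w + (2*z+1)/w := by
    have h1 : log y - log w = log (y/w) := (Real.log_div hypos.ne' hwpos.ne').symm
    have h2 : log (y/w) ≤ y/w - 1 := Real.log_le_sub_one_of_pos (by positivity)
    have h3 : y/w - 1 = (2*z+1)/w := by field_simp [hy, hw]; ring
    linarith [h1 ▸ h2.trans_eq h3]
  have hp1 : 0 ≤ p - 1 := by linarith
  have hmain : (p-1) * log y ≤ (p-1) * log w + 1/2 := by
    have h4 : (p-1) * ((2*z+1)/w) ≤ 1/2 := by
      have e1 : (p-1) * ((2*z+1)/w) = ((p-1)*(2*z+1))/w := by ring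
      rw [e1, div_le_iff₀ hwpos]
      nlinarith [key]
    calc (p-1) * log y ≤ (p-1) * (log w + (2*z+1)/w) :=
          mul_le_mul_of_nonneg_left hlog hp1
      _ = (p-1)*log w + (p-1)*((2*z+1)/w) := by ring
      _ ≤ (p-1)*log w + 1/2 := by linarith
  have : y^(p-1) = exp (log y * (p-1)) := Real.rpow_def_of_pos hypos _
  rw [this, Real.rpow_def_of_pos hwpos, ← Real.exp_half, ← Real.exp_add]
  apply Real.exp_le_exp.2
  nlinarith [hmain]

lemma f2_nonneg {p : ℝ} (hp : 1 ≤ p) (u : ℝ) : 0 ≤ f2 p u := by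
  unfold f2
  have h1 : (0:ℝ) < (u^2+4*p^2)^(p-1) := Real.rpow_pos_of_pos (base_pos hp u) _
  have h2 : (0:ℝ) < (u^2+4*p^2)^(p-2) := Real.rpow_pos_of_pos (base_pos hp u) _
  nlinarith [mul_nonneg (mul_nonneg (mul_nonneg (by linarith : (0:ℝ) ≤ 4*p)
      (by linarith : (0:ℝ) ≤ p-1)) (sq_nonneg u)) h2.le,
    mul_nonneg (by linarith : (0:ℝ) ≤ 2*p) h1.le]

lemma f2_bound {p z u : ℝ} (hp : 1 ≤ p) (hz : 0 ≤ z)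
    (hu : u ∈ Set.Icc (z-1) (z+1)) :
    f2 p u ≤ 2*p*(2*p-1) * Real.sqrt (exp 1) * (z^2+4*p^2)^(p-1) := by
  obtain ⟨hu1, hu2⟩ := hu
  have hx : 0 < u^2+4*p^2 := base_pos hp u
  have husq : u^2 ≤ (z+1)^2 := sq_le_sq' (by linarith) hu2
  have hstep : u^2 * (u^2+4*p^2)^(p-2) ≤ (u^2+4*p^2)^(p-1) := by
    have : (u^2+4*p^2)^(p-1) = (u^2+4*p^2)^(p-2) * (u^2+4*p^2) := by
      rw [← Real.rpow_add_one hx.ne']; ring_nf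
    rw [this]
    have h2 : (0:ℝ) < (u^2+4*p^2)^(p-2) := Real.rpow_pos_of_pos hx _
    nlinarith [sq_nonneg u]
  have hmono : (u^2+4*p^2)^(p-1) ≤ ((z+1)^2+4*p^2)^(p-1) :=
    Real.rpow_le_rpow hx.le (by nlinarith) (by linarith)
  have hexp := expo_bound hp hz (p := p)
  unfold f2
  have h1 : (0:ℝ) < (u^2+4*p^2)^(p-1) := Real.rpow_pos_of_pos hx _
  nlinarith [mul_le_mul_of_nonneg_left (hmono.trans hexp)
      (by nlinarith : (0:ℝ) ≤ 2*p*(2*p-1)),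
    mul_le_mul_of_nonneg_left hstep (by nlinarith : (0:ℝ) ≤ 4*p*(p-1))]

lemma taylor_bound {p z δ : ℝ} (hp : 1 ≤ p) (hz : 0 ≤ z) (hδ1 : -1 ≤ δ) (hδ2 : δ ≤ 1) :
    ((z+δ)^2+4*p^2)^p ≤ (z^2+4*p^2)^p + f1 p z * δ
      + p*(2*p-1)*Real.sqrt (exp 1)*(z^2+4*p^2)^(p-1) * δ^2 := by
  set M : ℝ := 2*p*(2*p-1)*Real.sqrt (exp 1)*(z^2+4*p^2)^(p-1) with hM
  have hMnn : 0 ≤ M := by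
    rw [hM]
    have h1 := Real.rpow_pos_of_pos (base_pos hp z) (p-1)
    have h2 := Real.sqrt_nonneg (Real.exp 1)
    exact mul_nonneg (mul_nonneg (mul_nonneg (by linarith : (0:ℝ) ≤ 2*p)
      (by linarith : (0:ℝ) ≤ 2*p-1)) h2) h1.le
  -- Lipschitz bound on f1
  have hlip : ∀ u ∈ Set.Icc (z-1) (z+1), |f1 p u - f1 p z| ≤ M * |u - z| := by
    intro u hu
    have h := Convex.norm_image_sub_le_of_norm_hasDerivWithin_le
      (f := f1 p) (f' := f2 p) (s := Set.Icc (z-1) (z+1))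
      (fun v _ => (hasDerivAt_f1 hp v).hasDerivWithinAt)
      (fun v hv => by
        rw [Real.norm_eq_abs, abs_of_nonneg (f2_nonneg hp v)]
        exact f2_bound hp hz hv)
      (convex_Icc _ _) (Set.mem_Icc.2 ⟨by linarith, by linarith⟩ : z ∈ Set.Icc (z-1) (z+1)) hu
    simpa [Real.norm_eq_abs] using h
  set g : ℝ → ℝ := fun u => (u^2+4*p^2)^p - f1 p z * u - M/2 * (u-z)^2 with hgdef
  have hg : ∀ u, HasDerivAt g (f1 p u - f1 p z - M*(u-z)) u := by
    intro u
    have h1 := hasDerivAt_pot hp u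
    have h2 : HasDerivAt (fun v : ℝ => f1 p z * v) (f1 p z) u := by
      simpa using (hasDerivAt_id u).const_mul (f1 p z)
    have h3 : HasDerivAt (fun v : ℝ => M/2 * (v-z)^2) (M/2 * (2*(u-z))) u := by
      have := (((hasDerivAt_id u).sub_const z).pow 2).const_mul (M/2)
      simpa using this
    have := (h1.sub h2).sub h3
    refine this.congr_deriv ?_
    ring
  have hgd : Differentiable ℝ g := fun u => (hg u).differentiableAt
  have key : g (z+δ) ≤ g z := by
    rcases le_or_gt 0 δ with h0 | h0
    · have hA : AntitoneOn g (Set.Icc z (z+1)) := by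
        apply antitoneOn_of_deriv_nonpos (convex_Icc _ _)
          hgd.continuous.continuousOn (hgd.differentiableOn)
        intro u hu
        rw [interior_Icc] at hu
        have hu' : u ∈ Set.Icc (z-1) (z+1) := ⟨by linarith [hu.1], hu.2.le⟩
        have hl := hlip u hu'
        rw [(hg u).deriv]
        have habs : |u - z| = u - z := abs_of_nonneg (by linarith [hu.1])
        rw [habs] at hl
        have := (abs_le.1 hl).2
        linarith
      exact hA ⟨le_refl z, by linarith⟩ ⟨by linarith, by linarith⟩ (by linarith)
    · have hA : MonotoneOn g (Set.Icc (z-1) z) := by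
        apply monotoneOn_of_deriv_nonneg (convex_Icc _ _)
          hgd.continuous.continuousOn (hgd.differentiableOn)
        intro u hu
        rw [interior_Icc] at hu
        have hu' : u ∈ Set.Icc (z-1) (z+1) := ⟨hu.1.le, by linarith [hu.2]⟩
        have hl := hlip u hu'
        rw [(hg u).deriv]
        have habs : |u - z| = z - u := by
          rw [abs_of_nonpos (by linarith [hu.2])]; ring
        rw [habs] at hl
        have := (abs_le.1 hl).1
        nlinarith
      exact hA ⟨by linarith, by linarith⟩ ⟨by linarith, le_refl z⟩ (by linarith)
  have hgz : g z = (z^2+4*p^2)^p - f1 p z * z := by simp [hgdef]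
  have hgzd : g (z+δ) = ((z+δ)^2+4*p^2)^p - f1 p z * (z+δ) - M/2 * δ^2 := by
    simp only [hgdef]; ring_nf
  rw [hgzd, hgz] at key
  nlinarith [key]

lemma f1_nonneg {p z : ℝ} (hp : 1 ≤ p) (hz : 0 ≤ z) : 0 ≤ f1 p z := by
  unfold f1
  have h1 : (0:ℝ) ≤ (z^2+4*p^2)^(p-1) := (Real.rpow_pos_of_pos (base_pos hp z) _).le
  have : (0:ℝ) ≤ 2*p*z := by nlinarith
  exact mul_nonneg this h1

lemma pot_max_bound {p z δ : ℝ} (hp : 1 ≤ p) (hz : 0 ≤ z) (hδ1 : -1 ≤ δ) (hδ2 : δ ≤ 1) :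
    potComp p (max (z+δ) 0) ≤ potComp p z + f1 p z * δ
      + p*(2*p-1)*Real.sqrt (exp 1)*(z^2+4*p^2)^(p-1) * δ^2 := by
  have hT := taylor_bound hp hz hδ1 hδ2
  rcases le_or_gt 0 (z+δ) with h0 | h0
  · rw [max_eq_left h0]
    exact hT
  · rw [max_eq_right h0.le]
    refine le_trans ?_ hT
    unfold potComp
    apply Real.rpow_le_rpow (by positivity) (by nlinarith [sq_nonneg (z+δ)]) (by linarith)

lemma sqrt_le_self' {a : ℝ} (ha : 1 ≤ a) : Real.sqrt a ≤ a := by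
  calc Real.sqrt a ≤ Real.sqrt (a^2) := Real.sqrt_le_sqrt (by nlinarith)
    _ = a := Real.sqrt_sq (by linarith)

lemma bern {a b p : ℝ} (hp : 1 ≤ p) (hb : 0 < b) (ha : 0 ≤ a) :
    b^p + p * b^(p-1) * a ≤ (b+a)^p := by
  have h1 : 1 + p * (a/b) ≤ (1 + a/b)^p :=
    one_add_mul_self_le_rpow_one_add (by nlinarith [div_nonneg ha hb.le] : (-1:ℝ) ≤ a/b) hp
  have h2 : (0:ℝ) ≤ 1 + a/b := by positivity
  have h3 := mul_le_mul_of_nonneg_left h1 (Real.rpow_pos_of_pos hb p).le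
  calc b^p + p * b^(p-1) * a = b^p * (1 + p * (a/b)) := by
        rw [Real.rpow_sub_one hb.ne']; field_simp
    _ ≤ b^p * (1 + a/b)^p := h3
    _ = (b * (1 + a/b))^p := (Real.mul_rpow hb.le h2).symm
    _ = (b+a)^p := by rw [mul_add, mul_one, mul_div_cancel₀ _ hb.ne']

lemma holder_sum {Q : Type*} [Fintype Q] (hQ : 0 < Fintype.card Q) {p : ℝ} (hp : 1 ≤ p)
    (x : Q → ℝ) (hx : ∀ q, 0 < x q) :
    ∑ q, x q ^ (p-1) ≤ (Fintype.card Q : ℝ) ^ (1/p) * (∑ q, x q ^ p) ^ ((p-1)/p) := by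
  set m : ℝ := (Fintype.card Q : ℝ) with hm
  have hm0 : 0 < m := by rw [hm]; exact_mod_cast hQ
  rcases eq_or_lt_of_le hp with rfl | hp1
  · simp only [sub_self, Real.rpow_zero, div_one, Real.rpow_one]
    simp [Finset.card_univ, hm]
  · have hp0 : 0 < p := by linarith
    have hq1 : 1 ≤ p/(p-1) := by
      rw [le_div_iff₀ (by linarith)]; linarith
    have hkey := Real.arith_mean_le_rpow_mean Finset.univ (fun _ => 1/m)
      (fun q => x q ^ (p-1)) (fun _ _ => by positivity)
      (by simp [Finset.card_univ]; field_simp; exact hm.symm) (fun q _ => (Real.rpow_pos_of_pos (hx q) _).le) hq1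
    have he1 : ∀ q : Q, (x q ^ (p-1)) ^ (p/(p-1)) = x q ^ p := by
      intro q
      rw [← Real.rpow_mul (hx q).le]
      congr 1
      rw [mul_comm]; exact div_mul_cancel₀ p (by linarith : p - 1 ≠ 0)
    simp only [he1] at hkey
    rw [← Finset.mul_sum, ← Finset.mul_sum] at hkey
    have hS : (0:ℝ) ≤ ∑ q, x q ^ p :=
      Finset.sum_nonneg fun q _ => (Real.rpow_pos_of_pos (hx q) _).le
    have he2 : (1/m * ∑ q, x q ^ p) ^ (1/(p/(p-1)))
        = (1/m) ^ ((p-1)/p) * (∑ q, x q ^ p) ^ ((p-1)/p) := by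
      rw [Real.mul_rpow (by positivity) hS]
      congr 2 <;> (rw [one_div_div])
    rw [he2] at hkey
    have hfin : m * ((1/m) ^ ((p-1)/p) * (∑ q, x q ^ p) ^ ((p-1)/p))
        = m ^ (1/p) * (∑ q, x q ^ p) ^ ((p-1)/p) := by
      rw [one_div, Real.inv_rpow hm0.le, ← mul_assoc, ← Real.rpow_neg hm0.le]
      congr 1
      rw [show m * m ^ (-((p-1)/p)) = m ^ (1 + -((p-1)/p)) by
        rw [Real.rpow_add hm0, Real.rpow_one]]
      congr 1
      field_simp
      ring
    calc ∑ q, x q ^ (p-1) = m * (1/m * ∑ q, x q ^ (p-1)) := by field_simp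
      _ ≤ m * ((1/m) ^ ((p-1)/p) * (∑ q, x q ^ p) ^ ((p-1)/p)) :=
          mul_le_mul_of_nonneg_left hkey hm0.le
      _ = m ^ (1/p) * (∑ q, x q ^ p) ^ ((p-1)/p) := hfin

end PerpetualFairness

open PerpetualFairness Real

/-- **Explicit perpetual `c_t`-fairness.** For a deficit process on a set of size
`m ≥ 2` satisfying the moment conditions, setting
`c_t := m ^ (1/p) * √(4p² + 2 √e p σ² t / n)`, at every time `t` no quality
variable is `c_t`-disappointed: `z t q ≤ c_t` for every `q`. -/
theorem perpetual_ct_fairness (Q : Type*) [Fintype Q] (hm : 2 ≤ Fintype.card Q)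
    (n : ℕ) (hn : 1 ≤ n) (p σ : ℝ) (hp : 1 ≤ p) (hσ : 0 ≤ σ)
    (z : ℕ → Q → ℝ) (hproc : DeficitProcess Q n σ p z) :
    ∀ t : ℕ, ∀ q : Q,
      z t q ≤ (Fintype.card Q : ℝ) ^ (1 / p) *
        Real.sqrt (4 * p ^ 2 + 2 * Real.sqrt (Real.exp 1) * p * σ ^ 2 * (t : ℝ) / (n : ℝ)) := by
  obtain ⟨hnn, h0, hstep⟩ := hproc
  set m : ℝ := (Fintype.card Q : ℝ) with hmdef
  have hm2 : (2:ℝ) ≤ m := by rw [hmdef]; exact_mod_cast hm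
  have hm0 : (0:ℝ) < m := by linarith
  have hn0 : (0:ℝ) < (n:ℝ) := by exact_mod_cast hn
  have hp0 : (0:ℝ) < p := by linarith
  have hse : (0:ℝ) ≤ Real.sqrt (Real.exp 1) := Real.sqrt_nonneg _
  set B : ℕ → ℝ := fun t =>
    4 * p ^ 2 + 2 * Real.sqrt (Real.exp 1) * p * σ ^ 2 * (t : ℝ) / (n : ℝ) with hBdef
  have hB0 : ∀ t : ℕ, 0 < B t := by
    intro t
    have ht : (0:ℝ) ≤ (t:ℝ) := Nat.cast_nonneg t
    have : (0:ℝ) ≤ 2 * Real.sqrt (Real.exp 1) * p * σ ^ 2 * (t : ℝ) / (n : ℝ) :=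
      div_nonneg (mul_nonneg (mul_nonneg (mul_nonneg (mul_nonneg (by norm_num) hse)
        hp0.le) (sq_nonneg σ)) ht) hn0.le
    have : (0:ℝ) < 4 * p ^ 2 := by nlinarith
    simp only [hBdef]
    linarith
  -- main potential induction
  have hPhi : ∀ t : ℕ, ∑ q, potComp p (z t q) ≤ m * (B t) ^ p := by
    intro t
    induction t with
    | zero =>
      have : ∀ q : Q, potComp p (z 0 q) = (4*p^2)^p := by
        intro q; rw [h0 q]; unfold potComp; norm_num
      rw [Finset.sum_congr rfl (fun q _ => this q), Finset.sum_const, Finset.card_univ,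
        nsmul_eq_mul]
      have hB0eq : B 0 = 4*p^2 := by simp [hBdef]
      rw [hB0eq]
    | succ t ih =>
      obtain ⟨Δ, hΔbd, hΔsum, hΔsq, hΦ⟩ := hstep t
      set C : Q → ℝ := fun q =>
        p*(2*p-1)*Real.sqrt (exp 1)*((z t q)^2+4*p^2)^(p-1) with hCdef
      have hCnn : ∀ q, 0 ≤ C q := by
        intro q
        have h1 := Real.rpow_pos_of_pos (base_pos hp (z t q)) (p-1)
        exact mul_nonneg (mul_nonneg (mul_nonneg (by linarith) (by linarith)) hse) h1.le
      -- pointwise bound summed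
      have hsum : ∑ k, ∑ q, potComp p (max (z t q + Δ q k) 0)
          ≤ (n:ℝ) * (∑ q, potComp p (z t q)) + σ^2 * ∑ q, C q := by
        have h2 : ∑ k, ∑ q, potComp p (max (z t q + Δ q k) 0)
            ≤ ∑ k, ∑ q, (potComp p (z t q) + f1 p (z t q) * Δ q k + C q * (Δ q k)^2) := by
          refine Finset.sum_le_sum fun k _ => Finset.sum_le_sum fun q _ => ?_
          exact pot_max_bound hp (hnn t q) (hΔbd q k).1 (hΔbd q k).2
        refine h2.trans ?_
        rw [Finset.sum_comm]
        have h3 : ∀ q : Q, ∑ k, (potComp p (z t q) + f1 p (z t q) * Δ q k + C q * (Δ q k)^2)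
            = (n:ℝ) * potComp p (z t q) + f1 p (z t q) * (∑ k, Δ q k)
              + C q * (∑ k, (Δ q k)^2) := by
          intro q
          rw [Finset.sum_add_distrib, Finset.sum_add_distrib, ← Finset.mul_sum,
            ← Finset.mul_sum, Finset.sum_const, Finset.card_univ, Fintype.card_fin,
            nsmul_eq_mul]
        rw [Finset.sum_congr rfl (fun q _ => h3 q)]
        have h4 : ∀ q : Q, (n:ℝ) * potComp p (z t q) + f1 p (z t q) * (∑ k, Δ q k)
            + C q * (∑ k, (Δ q k)^2) ≤ (n:ℝ) * potComp p (z t q) + σ^2 * C q := by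
          intro q
          have hb1 : f1 p (z t q) * (∑ k, Δ q k) ≤ 0 :=
            mul_nonpos_of_nonneg_of_nonpos (f1_nonneg hp (hnn t q)) (hΔsum q)
          have hb2 : C q * (∑ k, (Δ q k)^2) ≤ C q * σ^2 :=
            mul_le_mul_of_nonneg_left (hΔsq q) (hCnn q)
          nlinarith [hb1, hb2]
        refine (Finset.sum_le_sum fun q _ => h4 q).trans ?_
        rw [Finset.sum_add_distrib, ← Finset.mul_sum, ← Finset.mul_sum]
      have hΦ2 : ∑ q, potComp p (z (t+1) q)
          ≤ (∑ q, potComp p (z t q)) + (σ^2 / (n:ℝ)) * ∑ q, C q := by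
        refine hΦ.trans ?_
        have := mul_le_mul_of_nonneg_left hsum (by positivity : (0:ℝ) ≤ 1/(n:ℝ))
        refine this.trans_eq ?_
        field_simp
      -- Hölder
      have hxq : ∀ q : Q, (0:ℝ) < (z t q)^2 + 4*p^2 := fun q => base_pos hp (z t q)
      have hhold : ∑ q, ((z t q)^2+4*p^2)^(p-1)
          ≤ m ^ (1/p) * (∑ q, ((z t q)^2+4*p^2)^p) ^ ((p-1)/p) := by
        have := holder_sum (by omega : 0 < Fintype.card Q) hp
          (fun q => (z t q)^2 + 4*p^2) hxq
        simpa [hmdef] using this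
      have hpotx : ∀ q : Q, potComp p (z t q) = ((z t q)^2+4*p^2)^p := fun q => rfl
      have hsum_eq : ∑ q, potComp p (z t q) = ∑ q, ((z t q)^2+4*p^2)^p :=
        Finset.sum_congr rfl fun q _ => hpotx q
      -- bound (∑ x^p)^((p-1)/p) by (m * B t ^ p)^((p-1)/p)
      have hS_nonneg : (0:ℝ) ≤ ∑ q, ((z t q)^2+4*p^2)^p :=
        Finset.sum_nonneg fun q _ => (Real.rpow_pos_of_pos (hxq q) _).le
      have hSle : ∑ q, ((z t q)^2+4*p^2)^p ≤ m * (B t)^p := hsum_eq ▸ ih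
      have hmono2 : (∑ q, ((z t q)^2+4*p^2)^p) ^ ((p-1)/p) ≤ (m * (B t)^p) ^ ((p-1)/p) :=
        Real.rpow_le_rpow hS_nonneg hSle (div_nonneg (by linarith) hp0.le)
      have heq3 : (m * (B t)^p) ^ ((p-1)/p) = m ^ ((p-1)/p) * (B t)^(p-1) := by
        rw [Real.mul_rpow hm0.le (Real.rpow_pos_of_pos (hB0 t) p).le,
          ← Real.rpow_mul (hB0 t).le]
        congr 2
        rw [mul_comm]; exact div_mul_cancel₀ (p-1) hp0.ne'
      have hmm : m ^ (1/p) * m ^ ((p-1)/p) = m := by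
        rw [← Real.rpow_add hm0]
        rw [show 1/p + (p-1)/p = 1 by field_simp; ring]
        exact Real.rpow_one m
      -- combine
      have hCsum : ∑ q, C q = p*(2*p-1)*Real.sqrt (exp 1) * ∑ q, ((z t q)^2+4*p^2)^(p-1) := by
        rw [Finset.mul_sum]
      have hfinal : ∑ q, potComp p (z (t+1) q)
          ≤ m * (B t)^p + (σ^2/(n:ℝ)) * (p*(2*p-1)*Real.sqrt (exp 1)) * (m * (B t)^(p-1)) := by
        refine hΦ2.trans ?_
        have hC2 : ∑ q, C q ≤ p*(2*p-1)*Real.sqrt (exp 1) * (m * (B t)^(p-1)) := by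
          rw [hCsum]
          have hc0 : (0:ℝ) ≤ p*(2*p-1)*Real.sqrt (exp 1) :=
            mul_nonneg (mul_nonneg (by linarith) (by linarith)) hse
          refine mul_le_mul_of_nonneg_left ?_ hc0
          calc ∑ q, ((z t q)^2+4*p^2)^(p-1)
              ≤ m ^ (1/p) * (∑ q, ((z t q)^2+4*p^2)^p) ^ ((p-1)/p) := hhold
            _ ≤ m ^ (1/p) * (m * (B t)^p) ^ ((p-1)/p) :=
                mul_le_mul_of_nonneg_left hmono2 (Real.rpow_nonneg hm0.le _)
            _ = m ^ (1/p) * (m ^ ((p-1)/p) * (B t)^(p-1)) := by rw [heq3]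
            _ = m * (B t)^(p-1) := by rw [← mul_assoc, hmm]
        have := mul_le_mul_of_nonneg_left hC2 (by positivity : (0:ℝ) ≤ σ^2/(n:ℝ))
        calc (∑ q, potComp p (z t q)) + (σ^2 / (n:ℝ)) * ∑ q, C q
            ≤ m * (B t)^p + (σ^2/(n:ℝ)) * (p*(2*p-1)*Real.sqrt (exp 1) * (m * (B t)^(p-1))) := by
              have h5 := hsum_eq ▸ ih
              linarith [this]
          _ = m * (B t)^p + (σ^2/(n:ℝ)) * (p*(2*p-1)*Real.sqrt (exp 1)) * (m * (B t)^(p-1)) := by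
              ring
      -- Bernoulli step
      have hA : B (t+1) = B t + 2*Real.sqrt (Real.exp 1)*p*σ^2/(n:ℝ) := by
        simp only [hBdef]
        push_cast
        field_simp
        ring
      have hbern := bern hp (hB0 t) (show (0:ℝ) ≤ 2*Real.sqrt (Real.exp 1)*p*σ^2/(n:ℝ) from
        div_nonneg (mul_nonneg (mul_nonneg (by norm_num : (0:ℝ) ≤ 2*Real.sqrt (Real.exp 1))
          hp0.le) (sq_nonneg σ)) hn0.le) (p := p)
      have hBp1 : (0:ℝ) ≤ (B t)^(p-1) := (Real.rpow_pos_of_pos (hB0 t) _).le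
      have hcoef : (σ^2/(n:ℝ)) * (p*(2*p-1)*Real.sqrt (exp 1)) * (m * (B t)^(p-1))
          ≤ m * (p * (B t)^(p-1) * (2*Real.sqrt (Real.exp 1)*p*σ^2/(n:ℝ))) := by
        have key : (σ^2/(n:ℝ)) * (p*(2*p-1)*Real.sqrt (exp 1))
            ≤ p * (2*Real.sqrt (Real.exp 1)*p*σ^2/(n:ℝ)) := by
          rw [show p * (2*Real.sqrt (Real.exp 1)*p*σ^2/(n:ℝ))
              = (p*(2*Real.sqrt (Real.exp 1)*p*σ^2))/(n:ℝ) by ring,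
            show (σ^2/(n:ℝ)) * (p*(2*p-1)*Real.sqrt (exp 1))
              = (σ^2 * (p*(2*p-1)*Real.sqrt (exp 1)))/(n:ℝ) by ring]
          rw [div_le_div_iff₀ hn0 hn0]
          nlinarith [mul_nonneg (mul_nonneg (mul_nonneg hp0.le (sq_nonneg σ)) hse) hn0.le]
        calc (σ^2/(n:ℝ)) * (p*(2*p-1)*Real.sqrt (exp 1)) * (m * (B t)^(p-1))
            ≤ (p * (2*Real.sqrt (Real.exp 1)*p*σ^2/(n:ℝ))) * (m * (B t)^(p-1)) :=
              mul_le_mul_of_nonneg_right key (mul_nonneg hm0.le hBp1)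
          _ = m * (p * (B t)^(p-1) * (2*Real.sqrt (Real.exp 1)*p*σ^2/(n:ℝ))) := by ring
      calc ∑ q, potComp p (z (t+1) q)
          ≤ m * (B t)^p + (σ^2/(n:ℝ)) * (p*(2*p-1)*Real.sqrt (exp 1)) * (m * (B t)^(p-1)) :=
            hfinal
        _ ≤ m * (B t)^p + m * (p * (B t)^(p-1) * (2*Real.sqrt (Real.exp 1)*p*σ^2/(n:ℝ))) := by
            linarith [hcoef]
        _ = m * ((B t)^p + p * (B t)^(p-1) * (2*Real.sqrt (Real.exp 1)*p*σ^2/(n:ℝ))) := by ring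
        _ ≤ m * ((B t + 2*Real.sqrt (Real.exp 1)*p*σ^2/(n:ℝ)))^p :=
            mul_le_mul_of_nonneg_left hbern hm0.le
        _ = m * (B (t+1))^p := by rw [hA]
  -- conclude
  intro t q
  show z t q ≤ m ^ (1/p) * Real.sqrt (B t)
  have hzq := hnn t q
  have hone : potComp p (z t q) ≤ ∑ q', potComp p (z t q') :=
    Finset.single_le_sum
      (fun q' _ => Real.rpow_nonneg (by positivity : (0:ℝ) ≤ (z t q')^2 + 4*p^2) p)
      (Finset.mem_univ q)
  have hx : (0:ℝ) < (z t q)^2 + 4*p^2 := base_pos hp (z t q)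
  have hxle : ((z t q)^2 + 4*p^2)^p ≤ m * (B t)^p := le_trans hone (hPhi t)
  have hxB : (z t q)^2 + 4*p^2 ≤ m^(1/p) * B t := by
    have h1 : ((z t q)^2 + 4*p^2) = (((z t q)^2 + 4*p^2)^p)^(1/p) := by
      rw [← Real.rpow_mul hx.le, mul_one_div, div_self hp0.ne', Real.rpow_one]
    rw [h1]
    calc (((z t q)^2 + 4*p^2)^p)^(1/p) ≤ (m * (B t)^p)^(1/p) :=
          Real.rpow_le_rpow (Real.rpow_pos_of_pos hx p).le hxle (one_div_pos.2 hp0).le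
      _ = m^(1/p) * B t := by
          rw [Real.mul_rpow hm0.le (Real.rpow_pos_of_pos (hB0 t) p).le,
            ← Real.rpow_mul (hB0 t).le, mul_one_div, div_self hp0.ne', Real.rpow_one]
  have hz2 : (z t q)^2 ≤ m^(1/p) * B t := by
    have h4 : (0:ℝ) ≤ 4*p^2 := by positivity
    linarith [hxB]
  have hmrp1 : (1:ℝ) ≤ m^(1/p) := by
    calc (1:ℝ) = m ^ (0:ℝ) := (Real.rpow_zero m).symm
      _ ≤ m ^ (1/p) := Real.rpow_le_rpow_of_exponent_le (by linarith) (one_div_pos.2 hp0).le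
  calc z t q = Real.sqrt ((z t q)^2) := (Real.sqrt_sq hzq).symm
    _ ≤ Real.sqrt (m^(1/p) * B t) := Real.sqrt_le_sqrt hz2
    _ = Real.sqrt (m^(1/p)) * Real.sqrt (B t) := Real.sqrt_mul (by positivity) _
    _ ≤ m^(1/p) * Real.sqrt (B t) :=
        mul_le_mul_of_nonneg_right (sqrt_le_self' hmrp1) (Real.sqrt_nonneg _)
end

section
/- Let Q be a finite set of size m ≥ 3, n ≥ 1 an integer, σ ≥ 0 a real, set p := ln m, and let (z^t)_{t≥0} be a deficit process on Q satisfying the potential-rule moment conditions with parameters n, σ², p. Then for every t ≥ 0 and every q ∈ Q, z^t_q ≤ e · √(4p² + 2√e · p · σ² · t / n). -/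
open Finset

set_option maxHeartbeats 1000000

private lemma taylor2 {f f1 f2 : ℝ → ℝ} {u M d : ℝ}
    (hf : ∀ x, HasDerivAt f (f1 x) x) (hf1 : ∀ x, HasDerivAt f1 (f2 x) x)
    (hM : ∀ x ∈ Set.Icc (u - 1) (u + 1), f2 x ≤ M)
    (hd1 : -1 ≤ d) (hd2 : d ≤ 1) :
    f (u + d) ≤ f u + f1 u * d + M / 2 * d ^ 2 := by
  set g : ℝ → ℝ := fun x => f u + f1 u * (x - u) + M / 2 * (x - u) ^ 2 - f x with hgdef
  have hgd : ∀ x, HasDerivAt g (f1 u + M * (x - u) - f1 x) x := by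
    intro x
    have h0 : HasDerivAt (fun x : ℝ => x - u) 1 x := (hasDerivAt_id x).sub_const u
    have h1 : HasDerivAt (fun x : ℝ => f u + f1 u * (x - u) + M / 2 * (x - u) ^ 2)
        (f1 u + M * (x - u)) x := by
      have h2 : HasDerivAt (fun x : ℝ => f u + f1 u * (x - u) + M / 2 * (x - u) ^ 2)
          (0 + f1 u * 1 + M / 2 * ((2 : ℕ) * (x - u) ^ (2 - 1) * 1)) x := by
        exact ((hasDerivAt_const x (f u)).add (h0.const_mul (f1 u))).add
          ((h0.pow 2).const_mul (M / 2))
      convert h2 using 1; push_cast; ring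
    exact h1.sub (hf x)
  have hderiv : ∀ x, deriv g x = f1 u + M * (x - u) - f1 x := fun x => (hgd x).deriv
  -- sign of g' to the right of u
  have hpos : ∀ x ∈ Set.Icc u (u + 1), 0 ≤ f1 u + M * (x - u) - f1 x := by
    rintro x ⟨hx1, hx2⟩
    rcases eq_or_lt_of_le hx1 with rfl | hlt
    · have : M * (u - u) = 0 := by ring
      linarith
    · obtain ⟨η, hη, hslope⟩ := exists_hasDerivAt_eq_slope f1 f2 hlt
        (fun y _ => (hf1 y).continuousAt.continuousWithinAt) (fun y hy => hf1 y)
      have hηm : η ∈ Set.Icc (u - 1) (u + 1) := ⟨by linarith [hη.1], by linarith [hη.2]⟩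
      have h3 : f1 x - f1 u = f2 η * (x - u) := by
        rw [eq_div_iff (sub_ne_zero.2 hlt.ne')] at hslope; linarith
      have h4 : f2 η * (x - u) ≤ M * (x - u) :=
        mul_le_mul_of_nonneg_right (hM η hηm) (by linarith)
      linarith
  have hneg : ∀ x ∈ Set.Icc (u - 1) u, f1 u + M * (x - u) - f1 x ≤ 0 := by
    rintro x ⟨hx1, hx2⟩
    rcases eq_or_lt_of_le hx2 with rfl | hlt
    · have : M * (x - x) = 0 := by ring
      linarith
    · obtain ⟨η, hη, hslope⟩ := exists_hasDerivAt_eq_slope f1 f2 hlt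
        (fun y _ => (hf1 y).continuousAt.continuousWithinAt) (fun y hy => hf1 y)
      have hηm : η ∈ Set.Icc (u - 1) (u + 1) := ⟨by linarith [hη.1], by linarith [hη.2]⟩
      have h3 : f1 u - f1 x = f2 η * (u - x) := by
        rw [eq_div_iff (sub_ne_zero.2 hlt.ne')] at hslope; linarith
      have h4 : f2 η * (u - x) ≤ M * (u - x) :=
        mul_le_mul_of_nonneg_right (hM η hηm) (by linarith)
      linarith
  have hgu : g u = 0 := by simp [hgdef]
  have key : 0 ≤ g (u + d) := by
    rcases le_or_gt 0 d with hd0 | hd0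
    · have hmono : MonotoneOn g (Set.Icc u (u + 1)) := by
        apply monotoneOn_of_deriv_nonneg (convex_Icc u (u + 1))
          (fun x _ => (hgd x).continuousAt.continuousWithinAt)
          (fun x hx => (hgd x).differentiableAt.differentiableWithinAt)
        intro x hx
        rw [interior_Icc] at hx
        rw [hderiv x]
        exact hpos x ⟨hx.1.le, hx.2.le⟩
      have h5 : g u ≤ g (u + d) := hmono (Set.mem_Icc.2 ⟨le_refl u, by linarith⟩)
        (Set.mem_Icc.2 ⟨by linarith, by linarith⟩) (by linarith)
      rw [hgu] at h5; exact h5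
    · have hmono : AntitoneOn g (Set.Icc (u - 1) u) := by
        apply antitoneOn_of_deriv_nonpos (convex_Icc (u - 1) u)
          (fun x _ => (hgd x).continuousAt.continuousWithinAt)
          (fun x hx => (hgd x).differentiableAt.differentiableWithinAt)
        intro x hx
        rw [interior_Icc] at hx
        rw [hderiv x]
        exact hneg x ⟨hx.1.le, hx.2.le⟩
      have h5 : g u ≤ g (u + d) := hmono (Set.mem_Icc.2 ⟨by linarith, by linarith⟩)
        (Set.mem_Icc.2 ⟨by linarith, le_refl u⟩) (by linarith)
      rw [hgu] at h5; exact h5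
  have heq : g (u + d) = f u + f1 u * d + M / 2 * d ^ 2 - f (u + d) := by
    simp only [hgdef]; ring_nf
  rw [heq] at key; linarith

private lemma pointwise {p u d : ℝ} (hp : 1 ≤ p) (hu : 0 ≤ u) (hd1 : -1 ≤ d) (hd2 : d ≤ 1) :
    potComp p (max (u + d) 0) ≤ potComp p u
      + 2 * p * u * (u ^ 2 + 4 * p ^ 2) ^ (p - 1) * d
      + 2 * Real.exp 1 * p ^ 2 * (u ^ 2 + 4 * p ^ 2) ^ (p - 1) * d ^ 2 := by
  have hp0 : 0 < p := by linarith
  set F : ℝ → ℝ := fun x => (x ^ 2 + 4 * p ^ 2) ^ p with hF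
  set F1 : ℝ → ℝ := fun x => p * (x ^ 2 + 4 * p ^ 2) ^ (p - 1) * (2 * x) with hF1
  set F2 : ℝ → ℝ := fun x =>
    p * ((p - 1) * (x ^ 2 + 4 * p ^ 2) ^ (p - 2) * (2 * x)) * (2 * x)
      + p * (x ^ 2 + 4 * p ^ 2) ^ (p - 1) * 2 with hF2
  have hbase : ∀ x : ℝ, (0:ℝ) < x ^ 2 + 4 * p ^ 2 := fun x => by positivity
  have hb : ∀ x : ℝ, HasDerivAt (fun x : ℝ => x ^ 2 + 4 * p ^ 2) (2 * x) x := by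
    intro x
    have := (hasDerivAt_pow 2 x).add_const (4 * p ^ 2)
    refine this.congr_deriv ?_
    push_cast; ring
  have hFd : ∀ x, HasDerivAt F (F1 x) x := by
    intro x
    exact (Real.hasDerivAt_rpow_const (Or.inl (hbase x).ne')).comp x (hb x)
  have hF1d : ∀ x, HasDerivAt F1 (F2 x) x := by
    intro x
    have h1 : HasDerivAt (fun x : ℝ => (x ^ 2 + 4 * p ^ 2) ^ (p - 1))
        ((p - 1) * (x ^ 2 + 4 * p ^ 2) ^ (p - 1 - 1) * (2 * x)) x :=
      by have := (Real.hasDerivAt_rpow_const (p := p - 1) (Or.inl (hbase x).ne')).comp x (hb x); exact this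
    have h2 : HasDerivAt (fun x : ℝ => p * (x ^ 2 + 4 * p ^ 2) ^ (p - 1))
        (p * ((p - 1) * (x ^ 2 + 4 * p ^ 2) ^ (p - 2) * (2 * x))) x := by
      have := h1.const_mul p
      refine this.congr_deriv ?_
      ring_nf
    have h3 : HasDerivAt (fun x : ℝ => 2 * x) 2 x := by
      simpa using (hasDerivAt_id x).const_mul 2
    exact h2.mul h3
  -- the second-derivative bound
  set A : ℝ := u ^ 2 + 4 * p ^ 2 with hA
  have hA0 : 0 < A := hbase u
  set M : ℝ := 4 * Real.exp 1 * p ^ 2 * A ^ (p - 1) with hM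
  have hMb : ∀ x ∈ Set.Icc (u - 1) (u + 1), F2 x ≤ M := by
    rintro ξ ⟨hξ1, hξ2⟩
    set Aξ : ℝ := ξ ^ 2 + 4 * p ^ 2 with hAξ
    have hAξ0 : 0 < Aξ := hbase ξ
    have e1 : Aξ ^ (p - 1) = Aξ ^ (p - 2) * Aξ := by
      rw [show p - 1 = (p - 2) + 1 by ring, Real.rpow_add_one hAξ0.ne']
    have h1 : ξ ^ 2 * Aξ ^ (p - 2) ≤ Aξ ^ (p - 1) := by
      rw [e1]
      have h2 : ξ ^ 2 ≤ Aξ := by nlinarith [sq_nonneg p, hp0]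
      have := Real.rpow_nonneg hAξ0.le (p - 2)
      nlinarith
    have step1 : F2 ξ ≤ 4 * p ^ 2 * Aξ ^ (p - 1) := by
      have hF2ξ : F2 ξ = 4 * p * (p - 1) * (ξ ^ 2 * Aξ ^ (p - 2)) + 2 * p * Aξ ^ (p - 1) := by
        simp only [hF2]; ring
      rw [hF2ξ]
      have hc1 : 0 ≤ 4 * p * (p - 1) := by nlinarith
      have := mul_le_mul_of_nonneg_left h1 hc1
      have hAp : 0 ≤ Aξ ^ (p - 1) := Real.rpow_nonneg hAξ0.le _
      nlinarith
    -- Aξ ≤ (2p+1)²/(4p²) * A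
    have hξsq : ξ ^ 2 ≤ (u + 1) ^ 2 := by nlinarith
    have hratio : Aξ ≤ (2 * p + 1) ^ 2 / (4 * p ^ 2) * A := by
      rw [div_mul_eq_mul_div, le_div_iff₀ (by positivity)]
      nlinarith [sq_nonneg (u - p), hp0, hξsq]
    have hC1 : (1:ℝ) ≤ (2 * p + 1) ^ 2 / (4 * p ^ 2) := by
      rw [le_div_iff₀ (by positivity)]
      nlinarith
    have step2 : Aξ ^ (p - 1) ≤ Real.exp 1 * A ^ (p - 1) := by
      have h3 : Aξ ^ (p - 1) ≤ ((2 * p + 1) ^ 2 / (4 * p ^ 2) * A) ^ (p - 1) :=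
        Real.rpow_le_rpow hAξ0.le hratio (by linarith)
      have h4 : ((2 * p + 1) ^ 2 / (4 * p ^ 2) * A) ^ (p - 1)
          = ((2 * p + 1) ^ 2 / (4 * p ^ 2)) ^ (p - 1) * A ^ (p - 1) :=
        Real.mul_rpow (by positivity) hA0.le
      have h5 : ((2 * p + 1) ^ 2 / (4 * p ^ 2)) ^ (p - 1) ≤ Real.exp 1 := by
        rw [Real.rpow_def_of_pos (by positivity)]
        apply Real.exp_le_exp.2
        have hlog := Real.log_le_sub_one_of_pos (show (0:ℝ) < (2 * p + 1) ^ 2 / (4 * p ^ 2) by positivity)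
        have h6 : (2 * p + 1) ^ 2 / (4 * p ^ 2) - 1 = (4 * p + 1) / (4 * p ^ 2) := by
          field_simp; ring
        have h7 : Real.log ((2 * p + 1) ^ 2 / (4 * p ^ 2)) * (p - 1)
            ≤ ((4 * p + 1) / (4 * p ^ 2)) * (p - 1) := by
          apply mul_le_mul_of_nonneg_right _ (by linarith)
          rw [← h6]; exact hlog
        have h8 : ((4 * p + 1) / (4 * p ^ 2)) * (p - 1) ≤ 1 := by
          rw [div_mul_eq_mul_div, div_le_one (by positivity)]
          nlinarith
        linarith
      calc Aξ ^ (p - 1) ≤ ((2 * p + 1) ^ 2 / (4 * p ^ 2)) ^ (p - 1) * A ^ (p - 1) := by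
            rw [← h4]; exact h3
        _ ≤ Real.exp 1 * A ^ (p - 1) :=
            mul_le_mul_of_nonneg_right h5 (Real.rpow_nonneg hA0.le _)
    calc F2 ξ ≤ 4 * p ^ 2 * Aξ ^ (p - 1) := step1
      _ ≤ 4 * p ^ 2 * (Real.exp 1 * A ^ (p - 1)) :=
          mul_le_mul_of_nonneg_left step2 (by positivity)
      _ = M := by rw [hM]; ring
  have htay := taylor2 hFd hF1d hMb hd1 hd2
  have hmax : potComp p (max (u + d) 0) ≤ F (u + d) := by
    simp only [potComp, hF]
    refine Real.rpow_le_rpow (by positivity) ?_ hp0.le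
    have : (max (u + d) 0) ^ 2 ≤ (u + d) ^ 2 := by
      rcases le_or_gt (u + d) 0 with h | h
      · rw [max_eq_right h]; nlinarith [sq_nonneg (u + d)]
      · rw [max_eq_left h.le]
    linarith
  have hfin : F u + F1 u * d + M / 2 * d ^ 2
      = potComp p u + 2 * p * u * (u ^ 2 + 4 * p ^ 2) ^ (p - 1) * d
        + 2 * Real.exp 1 * p ^ 2 * (u ^ 2 + 4 * p ^ 2) ^ (p - 1) * d ^ 2 := by
    simp only [hF, hF1, hM, hA, potComp]; ring
  calc potComp p (max (u + d) 0) ≤ F (u + d) := hmax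
    _ ≤ F u + F1 u * d + M / 2 * d ^ 2 := htay
    _ = _ := hfin

/-- **Best choice of `p`.** If `m ≥ 3` and the deficit process satisfies the
moment conditions with `p = ln m`, then at every time `t` and for every quality
variable `q`, `z t q ≤ e * √(4p² + 2 √e p σ² t / n)`. -/
theorem perpetual_fairness_log_p (Q : Type*) [Fintype Q] (hm : 3 ≤ Fintype.card Q)
    (n : ℕ) (hn : 1 ≤ n) (σ : ℝ) (hσ : 0 ≤ σ)
    (z : ℕ → Q → ℝ)
    (hproc : DeficitProcess Q n σ (Real.log (Fintype.card Q)) z) :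
    ∀ t : ℕ, ∀ q : Q,
      z t q ≤ Real.exp 1 *
        Real.sqrt (4 * (Real.log (Fintype.card Q)) ^ 2 +
          2 * Real.sqrt (Real.exp 1) * Real.log (Fintype.card Q) * σ ^ 2 * (t : ℝ) / (n : ℝ)) := by
  obtain ⟨hz0, hzinit, hstep⟩ := hproc
  intro t q
  set p : ℝ := Real.log (Fintype.card Q) with hpdef
  have hm3 : (3:ℝ) ≤ (Fintype.card Q : ℝ) := by exact_mod_cast hm
  have hmpos : (0:ℝ) < (Fintype.card Q : ℝ) := by linarith
  have hp1 : 1 < p := by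
    rw [hpdef, Real.lt_log_iff_exp_lt hmpos]
    calc Real.exp 1 < 2.7182818286 := Real.exp_one_lt_d9
      _ ≤ 3 := by norm_num
      _ ≤ _ := hm3
  have hp0 : 0 < p := by linarith
  have hp1' : 1 ≤ p := hp1.le
  have hexpp : Real.exp p = (Fintype.card Q : ℝ) := Real.exp_log hmpos
  set e1 : ℝ := Real.exp 1 with he1def
  have he0 : (0:ℝ) < e1 := Real.exp_pos 1
  have he1 : (1:ℝ) ≤ e1 := by
    have := Real.exp_one_gt_d9; rw [he1def]; linarith
  have hn0 : (0:ℝ) < (n:ℝ) := by exact_mod_cast Nat.lt_of_lt_of_le Nat.zero_lt_one hn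
  set δ : ℝ := 2 * e1 ^ 2 * p * σ ^ 2 / (n:ℝ) with hδdef
  have hδ0 : 0 ≤ δ := by positivity
  set B : ℕ → ℝ := fun s => 4 * e1 * p ^ 2 + δ * s with hBdef
  have hBpos : ∀ s : ℕ, 0 < B s := by
    intro s
    have h1 : (0:ℝ) ≤ δ * s := by positivity
    have h2 : (0:ℝ) < 4 * e1 * p ^ 2 := by positivity
    simp only [hBdef]; linarith
  have hme1 : e1 ^ p = (Fintype.card Q : ℝ) := by
    rw [he1def, Real.exp_one_rpow, hexpp]
  -- the key induction
  have key : ∀ s : ℕ, (∑ q, potComp p (z s q)) ≤ (B s) ^ p := by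
    intro s; induction s with
    | zero =>
      have h0 : ∀ q : Q, potComp p (z 0 q) = (4 * p ^ 2) ^ p := by
        intro q; rw [hzinit q]; simp [potComp]
      rw [Finset.sum_congr rfl (fun q _ => h0 q), Finset.sum_const, Finset.card_univ,
        nsmul_eq_mul]
      have hB0 : B 0 = e1 * (4 * p ^ 2) := by
        simp only [hBdef, Nat.cast_zero, mul_zero, add_zero]; ring
      rw [hB0, Real.mul_rpow he0.le (by positivity), hme1]
    | succ s ih =>
      obtain ⟨Δ, hΔmem, hΔsum, hΔsq, hΔpot⟩ := hstep s
      set A : Q → ℝ := fun q => (z s q) ^ 2 + 4 * p ^ 2 with hAdef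
      have hA0 : ∀ q, 0 < A q := fun q => by simp only [hAdef]; positivity
      set S1 : ℝ := ∑ q, potComp p (z s q) with hS1def
      set S2 : ℝ := ∑ q, (A q) ^ (p - 1) with hS2def
      have hS1nn : 0 ≤ S1 := by
        rw [hS1def]
        exact Finset.sum_nonneg fun q _ => Real.rpow_nonneg (by positivity) p
      have h2 : ∀ q : Q, (∑ k : Fin n, potComp p (max (z s q + Δ q k) 0))
          ≤ (n:ℝ) * potComp p (z s q) + (2 * e1 * p ^ 2 * σ ^ 2) * (A q) ^ (p - 1) := by
        intro q
        have hrnn : 0 ≤ (A q) ^ (p - 1) := Real.rpow_nonneg (hA0 q).le (p - 1)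
        have hznn := hz0 s q
        have hL : 0 ≤ 2 * p * (z s q) * (A q) ^ (p - 1) := by positivity
        have hK : 0 ≤ 2 * e1 * p ^ 2 * (A q) ^ (p - 1) := by positivity
        calc (∑ k : Fin n, potComp p (max (z s q + Δ q k) 0))
            ≤ ∑ k : Fin n, (potComp p (z s q)
                + 2 * p * (z s q) * (A q) ^ (p - 1) * Δ q k
                + 2 * e1 * p ^ 2 * (A q) ^ (p - 1) * (Δ q k) ^ 2) := by
              apply Finset.sum_le_sum
              intro k _
              have := pointwise hp1' (hz0 s q) (hΔmem q k).1 (hΔmem q k).2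
              simpa only [he1def, hAdef] using this
          _ = (n:ℝ) * potComp p (z s q)
                + (2 * p * (z s q) * (A q) ^ (p - 1)) * (∑ k : Fin n, Δ q k)
                + (2 * e1 * p ^ 2 * (A q) ^ (p - 1)) * (∑ k : Fin n, (Δ q k) ^ 2) := by
              rw [Finset.sum_add_distrib, Finset.sum_add_distrib, ← Finset.mul_sum,
                ← Finset.mul_sum, Finset.sum_const, Finset.card_univ, Fintype.card_fin,
                nsmul_eq_mul]
          _ ≤ (n:ℝ) * potComp p (z s q) + 0
                + (2 * e1 * p ^ 2 * (A q) ^ (p - 1)) * σ ^ 2 := by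
              have t1 := mul_nonpos_of_nonneg_of_nonpos hL (hΔsum q)
              have t2 := mul_le_mul_of_nonneg_left (hΔsq q) hK
              linarith
          _ = (n:ℝ) * potComp p (z s q) + (2 * e1 * p ^ 2 * σ ^ 2) * (A q) ^ (p - 1) := by
              ring
      have h3 : (∑ q, potComp p (z (s+1) q)) ≤ S1 + (2 * e1 * p ^ 2 * σ ^ 2 / n) * S2 := by
        calc (∑ q, potComp p (z (s+1) q))
            ≤ (1 / (n : ℝ)) * ∑ k : Fin n, ∑ q, potComp p (max (z s q + Δ q k) 0) := hΔpot
          _ = (1 / (n : ℝ)) * ∑ q, ∑ k : Fin n, potComp p (max (z s q + Δ q k) 0) := by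
              rw [Finset.sum_comm]
          _ ≤ (1 / (n : ℝ)) * ∑ q, ((n:ℝ) * potComp p (z s q)
                + (2 * e1 * p ^ 2 * σ ^ 2) * (A q) ^ (p - 1)) := by
              apply mul_le_mul_of_nonneg_left (Finset.sum_le_sum fun q _ => h2 q)
              positivity
          _ = S1 + (2 * e1 * p ^ 2 * σ ^ 2 / n) * S2 := by
              rw [Finset.sum_add_distrib, ← Finset.mul_sum, ← Finset.mul_sum, ← hS1def,
                ← hS2def]
              field_simp
      have hpm : S2 ≤ e1 * (B s) ^ (p - 1) := by
        have hpne : p - 1 ≠ 0 := by linarith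
        have hr : 1 ≤ p / (p - 1) := by
          rw [le_div_iff₀ (by linarith)]; linarith
        have hw : (∑ _q : Q, (1 / (Fintype.card Q : ℝ))) = 1 := by
          rw [Finset.sum_const, Finset.card_univ, nsmul_eq_mul]
          field_simp
        have hjen := Real.arith_mean_le_rpow_mean Finset.univ
          (fun _ => 1 / (Fintype.card Q : ℝ)) (fun q => (A q) ^ (p - 1))
          (fun i _ => by positivity) hw
          (fun i _ => Real.rpow_nonneg (hA0 i).le _) hr
        have hx1 : ∀ q : Q, ((A q) ^ (p - 1)) ^ (p / (p - 1)) = (A q) ^ p := by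
          intro q
          rw [← Real.rpow_mul (hA0 q).le]
          congr 1
          field_simp
        simp only [hx1] at hjen
        rw [← Finset.mul_sum, ← Finset.mul_sum, ← hS2def, one_div_div] at hjen
        have hsum : (∑ q : Q, (A q) ^ p) = S1 := by
          rw [hS1def]
          apply Finset.sum_congr rfl
          intro q _
          simp [potComp, hAdef]
        rw [hsum] at hjen
        -- hjen : (1/m) * S2 ≤ ((1/m) * S1) ^ ((p-1)/p)
        have harg : (1 / (Fintype.card Q : ℝ)) * S1 ≤ (B s / e1) ^ p := by
          have h5 : (B s / e1) ^ p = (B s) ^ p / e1 ^ p :=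
            Real.div_rpow (hBpos s).le he0.le p
          rw [h5, hme1, one_div_mul_eq_div]
          gcongr
        have hstep2 : ((1 / (Fintype.card Q : ℝ)) * S1) ^ ((p - 1) / p)
            ≤ ((B s / e1) ^ p) ^ ((p - 1) / p) :=
          Real.rpow_le_rpow (by positivity) harg (div_nonneg (by linarith) hp0.le)
        have hstep3 : ((B s / e1) ^ p) ^ ((p - 1) / p) = (B s / e1) ^ (p - 1) := by
          rw [← Real.rpow_mul (by positivity)]
          congr 1
          field_simp
        have h7 : (1 / (Fintype.card Q : ℝ)) * S2 ≤ (B s / e1) ^ (p - 1) :=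
          le_trans hjen (le_trans hstep2 hstep3.le)
        have h6 : S2 ≤ (Fintype.card Q : ℝ) * (B s / e1) ^ (p - 1) := by
          calc S2 = (Fintype.card Q : ℝ) * ((1 / (Fintype.card Q : ℝ)) * S2) := by
                field_simp
            _ ≤ (Fintype.card Q : ℝ) * ((B s / e1) ^ (p - 1)) :=
                mul_le_mul_of_nonneg_left h7 hmpos.le
        have h8 : (Fintype.card Q : ℝ) * (B s / e1) ^ (p - 1) = e1 * (B s) ^ (p - 1) := by
          rw [← hme1, Real.div_rpow (hBpos s).le he0.le]
          have he1p : e1 ^ p = e1 ^ (p - 1) * e1 := by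
            have h9 := Real.rpow_add_one he0.ne' (p - 1)
            have h10 : p - 1 + 1 = p := by ring
            rw [h10] at h9
            exact h9
          have hne : e1 ^ (p - 1) ≠ 0 := (Real.rpow_pos_of_pos he0 _).ne'
          rw [he1p]
          field_simp
        rw [h8] at h6
        exact h6
      have h4 : (∑ q, potComp p (z (s+1) q)) ≤ (B s) ^ p + p * (B s) ^ (p - 1) * δ := by
        have c0 : 0 ≤ 2 * e1 * p ^ 2 * σ ^ 2 / (n:ℝ) := by positivity
        calc (∑ q, potComp p (z (s+1) q)) ≤ S1 + (2 * e1 * p ^ 2 * σ ^ 2 / n) * S2 := h3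
          _ ≤ (B s) ^ p + (2 * e1 * p ^ 2 * σ ^ 2 / n) * (e1 * (B s) ^ (p - 1)) :=
              add_le_add ih (mul_le_mul_of_nonneg_left hpm c0)
          _ = (B s) ^ p + p * (B s) ^ (p - 1) * δ := by rw [hδdef]; ring
      have h5 : (B s) ^ p + p * (B s) ^ (p - 1) * δ ≤ (B (s+1)) ^ p := by
        have hBs := hBpos s
        have hdb : (0:ℝ) ≤ δ / B s := by positivity
        have hber := one_add_mul_self_le_rpow_one_add
          (show (-1:ℝ) ≤ δ / B s by linarith) hp1'
        have h6 := mul_le_mul_of_nonneg_left hber (Real.rpow_nonneg hBs.le p)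
        have h7 : (B s) ^ p * (1 + δ / B s) ^ p = (B (s+1)) ^ p := by
          rw [← Real.mul_rpow hBs.le (by positivity)]
          congr 1
          have h11 : (B s) * (1 + δ / B s) = B s + δ := by field_simp
          rw [h11]
          simp only [hBdef]
          push_cast
          ring
        have h8 : (B s) ^ p * (1 + p * (δ / B s)) = (B s) ^ p + p * (B s) ^ (p - 1) * δ := by
          have h9 : (B s) ^ (p - 1) = (B s) ^ p / B s := Real.rpow_sub_one hBs.ne' p
          rw [h9]
          field_simp
        linarith [h6, h7.le, h7.ge, h8.le, h8.ge]
      exact h4.trans h5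
  -- extraction
  have hpos_pot : ∀ q' : Q, 0 ≤ potComp p (z t q') := fun q' =>
    Real.rpow_nonneg (by positivity) p
  have hq : potComp p (z t q) ≤ (B t) ^ p :=
    le_trans (Finset.single_le_sum (fun i _ => hpos_pot i) (Finset.mem_univ q)) (key t)
  have hAB : (z t q) ^ 2 + 4 * p ^ 2 ≤ B t := by
    by_contra hcon
    push_neg at hcon
    have hlt := Real.rpow_lt_rpow (hBpos t).le hcon hp0
    have heq : potComp p (z t q) = ((z t q) ^ 2 + 4 * p ^ 2) ^ p := rfl
    linarith [hq, hlt, heq.le, heq.ge]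
  set r : ℝ := p * σ ^ 2 * (t:ℝ) / (n:ℝ) with hrdef
  have hr0 : 0 ≤ r := by positivity
  have hsq1 : (1:ℝ) ≤ Real.sqrt e1 := by
    have h12 := Real.sqrt_le_sqrt he1
    simpa using h12
  have hABr : (z t q) ^ 2 + 4 * p ^ 2 ≤ 4 * e1 * p ^ 2 + 2 * e1 ^ 2 * r := by
    have h13 : δ * (t:ℝ) = 2 * e1 ^ 2 * r := by rw [hδdef, hrdef]; ring
    have hBt : B t = 4 * e1 * p ^ 2 + δ * (t:ℝ) := rfl
    linarith [hAB, h13.le, h13.ge]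
  have hW : e1 ^ 2 * (4 * p ^ 2 + 2 * Real.sqrt e1 * p * σ ^ 2 * (t:ℝ) / (n:ℝ))
      = 4 * e1 ^ 2 * p ^ 2 + 2 * e1 ^ 2 * Real.sqrt e1 * r := by
    rw [hrdef]; ring
  have t1 : 4 * e1 * p ^ 2 ≤ 4 * e1 ^ 2 * p ^ 2 := by
    nlinarith [mul_nonneg (mul_nonneg he0.le (sub_nonneg.2 he1)) (sq_nonneg p)]
  have t2 : 2 * e1 ^ 2 * r ≤ 2 * e1 ^ 2 * Real.sqrt e1 * r := by
    nlinarith [mul_nonneg (mul_nonneg (by positivity : (0:ℝ) ≤ 2 * e1 ^ 2) hr0)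
      (sub_nonneg.2 hsq1)]
  have hzsq : (z t q) ^ 2
      ≤ e1 ^ 2 * (4 * p ^ 2 + 2 * Real.sqrt e1 * p * σ ^ 2 * (t:ℝ) / (n:ℝ)) := by
    rw [hW]
    linarith [hABr, t1, t2, sq_nonneg p]
  calc z t q = Real.sqrt ((z t q) ^ 2) := (Real.sqrt_sq (hz0 t q)).symm
    _ ≤ Real.sqrt (e1 ^ 2 * (4 * p ^ 2 + 2 * Real.sqrt e1 * p * σ ^ 2 * (t:ℝ) / (n:ℝ))) :=
        Real.sqrt_le_sqrt hzsq
    _ = e1 * Real.sqrt (4 * p ^ 2 + 2 * Real.sqrt e1 * p * σ ^ 2 * (t:ℝ) / (n:ℝ)) := by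
        rw [Real.sqrt_mul (sq_nonneg e1), Real.sqrt_sq he0.le]
end

section
/- Let k be a natural number and let (x_r)_{r≥1} and (y_r)_{r≥1} be nonincreasing sequences of nonnegative reals, each with only finitely many nonzero terms. Suppose that for every real τ > 0, the number of indices r with x_r ≥ τ is at most k plus the number of indices r with y_r ≥ τ. Then Σ_{r≥1} x_{k+r} ≤ Σ_{r≥1} y_r; equivalently, Σ_{r≥1} x_r − Σ_{r=1}^{k} x_r ≤ Σ_{r≥1} y_r. -/
/-- **Threshold deficits imply EFk (combinatorial core).**
Let `k : ℕ` and let `x, y : ℕ → ℝ` be nonincreasing sequences of nonnegative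
reals with finite support (the index `r : ℕ` plays the role of `r ≥ 1`).
If for every threshold `τ > 0` the number of indices with `x r ≥ τ` is at most
`k` plus the number of indices with `y r ≥ τ`, then
`∑ r, x (k + r) ≤ ∑ r, y r`; equivalently,
`∑ r, x r - ∑_{r < k} x r ≤ ∑ r, y r`. -/
theorem threshold_deficits_imply_EFk (k : ℕ) (x y : ℕ → ℝ)
    (hxmono : Antitone x) (hymono : Antitone y)
    (hx0 : ∀ r, 0 ≤ x r) (hy0 : ∀ r, 0 ≤ y r)
    (hxfin : (Function.support x).Finite) (hyfin : (Function.support y).Finite)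
    (hcount : ∀ τ : ℝ, 0 < τ →
      {r : ℕ | τ ≤ x r}.ncard ≤ k + {r : ℕ | τ ≤ y r}.ncard) :
    (∑' r : ℕ, x (k + r) ≤ ∑' r : ℕ, y r) ∧
    ((∑' r : ℕ, x r) - ∑ r ∈ Finset.range k, x r ≤ ∑' r : ℕ, y r) := by
  -- pointwise bound
  have key : ∀ r, x (k + r) ≤ y r := by
    intro r
    by_contra h
    push_neg at h
    set τ := x (k + r) with hτ
    have hτpos : 0 < τ := lt_of_le_of_lt (hy0 r) h
    have hsub : Set.Iic (k + r) ⊆ {s : ℕ | τ ≤ x s} := by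
      intro s hs
      exact le_trans le_rfl (hxmono hs)
    have hsub2 : {s : ℕ | τ ≤ y s} ⊆ Set.Iio r := by
      intro s hs
      simp only [Set.mem_setOf_eq] at hs
      by_contra hsr
      simp only [Set.mem_Iio, not_lt] at hsr
      exact absurd (le_trans hs (hymono hsr)) (not_le.mpr h)
    have hSfin : {s : ℕ | τ ≤ x s}.Finite := by
      apply hxfin.subset
      intro s hs
      simp only [Set.mem_setOf_eq] at hs
      exact fun h0 => absurd hs (by rw [h0]; exact not_le.mpr hτpos)
    have hA : k + r + 1 ≤ {s : ℕ | τ ≤ x s}.ncard := by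
      have := Set.ncard_le_ncard hsub hSfin
      simpa [← Finset.coe_Iic, Set.ncard_coe_finset] using this
    have hB : {s : ℕ | τ ≤ y s}.ncard ≤ r := by
      have := Set.ncard_le_ncard hsub2 (Set.finite_Iio r)
      simpa [← Finset.coe_Iio, Set.ncard_coe_finset] using this
    have := hcount τ hτpos
    omega
  -- summability
  have hxs : Summable x := summable_of_finite_support hxfin
  have hys : Summable y := summable_of_finite_support hyfin
  have hxs' : Summable (fun r => x (k + r)) := by
    have := (summable_nat_add_iff k).mpr hxs
    simpa [Nat.add_comm] using this
  have h1 : ∑' r : ℕ, x (k + r) ≤ ∑' r : ℕ, y r :=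
    Summable.tsum_le_tsum key hxs' hys
  refine ⟨h1, ?_⟩
  have heq : ∑ r ∈ Finset.range k, x r + ∑' r : ℕ, x (k + r) = ∑' r : ℕ, x r := by
    have := Summable.sum_add_tsum_nat_add (f := x) k hxs
    simpa [Nat.add_comm] using this
  linarith
end

section
/- Let n ≥ 2 be an integer, c ≥ 1 a real, and z a real with c ≤ z ≤ 4c. Set s := (n−1) / (n(z + c)) and define ψ(u) := u + c·ln u for u > 0. Then 1/(10c) ≤ s ≤ 1/2, the identity ψ(z) − ψ(z(1 + s)) + ψ'(z)·z·s = c·(s − ln(1 + s)) holds, and c·(s − ln(1 + s)) ≥ 1/(400c). -/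
lemma log_one_add_le_aux {s : ℝ} (h0 : 0 ≤ s) (h1 : s ≤ 1 / 2) :
    Real.log (1 + s) ≤ s - s ^ 2 / 4 := by
  have ht : 0 ≤ s - s ^ 2 / 4 := by nlinarith
  have hq := Real.quadratic_le_exp_of_nonneg ht
  have hle : 1 + s ≤ Real.exp (s - s ^ 2 / 4) := by nlinarith
  have hpos : 0 < 1 + s := by linarith
  calc Real.log (1 + s) ≤ Real.log (Real.exp (s - s ^ 2 / 4)) :=
        Real.log_le_log hpos hle
    _ = s - s ^ 2 / 4 := Real.log_exp _

/-- **Per-round potential drop in low-value winner rounds.**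
Let `n ≥ 2`, `c ≥ 1`, and `c ≤ z ≤ 4c`. Set `s := (n-1) / (n (z + c))` and
`ψ u := u + c ln u`. Then `1/(10c) ≤ s ≤ 1/2`, the identity
`ψ z - ψ (z (1+s)) + ψ' z · z · s = c (s - ln (1+s))` holds (where
`ψ' z = 1 + c/z`), and `c (s - ln (1+s)) ≥ 1/(400 c)`. -/
theorem low_value_round_drop (n : ℕ) (hn : 2 ≤ n) (c z : ℝ)
    (hc : 1 ≤ c) (hz1 : c ≤ z) (hz2 : z ≤ 4 * c)
    (s : ℝ) (hs : s = ((n : ℝ) - 1) / ((n : ℝ) * (z + c))) :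
    (1 / (10 * c) ≤ s ∧ s ≤ 1 / 2) ∧
    ((z + c * Real.log z) - (z * (1 + s) + c * Real.log (z * (1 + s))) +
        (1 + c / z) * z * s = c * (s - Real.log (1 + s))) ∧
    (1 / (400 * c) ≤ c * (s - Real.log (1 + s))) := by
  have hc0 : (0:ℝ) < c := lt_of_lt_of_le one_pos hc
  have hz0 : (0:ℝ) < z := lt_of_lt_of_le hc0 hz1
  have hn2 : (2:ℝ) ≤ (n:ℝ) := by exact_mod_cast hn
  have hzc : (0:ℝ) < z + c := by linarith
  have hnpos : (0:ℝ) < (n:ℝ) := by linarith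
  have hden : (0:ℝ) < (n:ℝ) * (z + c) := by positivity
  -- bounds on s
  have hs_lb : 1 / (10 * c) ≤ s := by
    rw [hs, div_le_div_iff₀ (by positivity) hden]
    have h1 : (n:ℝ) * (z + c) ≤ (n:ℝ) * (5 * c) := by
      apply mul_le_mul_of_nonneg_left (by linarith) (by linarith)
    nlinarith
  have hs_ub : s ≤ 1 / 2 := by
    rw [hs, div_le_div_iff₀ hden (by norm_num)]
    nlinarith
  have hs0 : 0 < s := lt_of_lt_of_le (by positivity) hs_lb
  refine ⟨⟨hs_lb, hs_ub⟩, ?_, ?_⟩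
  · rw [Real.log_mul hz0.ne' (by positivity)]
    field_simp
    ring
  · have hlog := log_one_add_le_aux hs0.le hs_ub
    have h2 : 1 / (10 * c) * (1 / (10 * c)) ≤ s * s :=
      mul_self_le_mul_self (by positivity) hs_lb
    have h3 : 1 / (10 * c) * (1 / (10 * c)) = 1 / (100 * c ^ 2) := by
      field_simp; ring
    have h4 : 1 / (100 * c ^ 2) ≤ s ^ 2 := by rw [← h3]; nlinarith
    have h5 : c * (s ^ 2 / 4) ≥ 1 / (400 * c) := by
      rw [ge_iff_le, div_le_iff₀ (by positivity)]
      have : c * (1 / (100 * c ^ 2) / 4) * (400 * c) = 1 := by field_simp; ring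
      nlinarith
    nlinarith
end

section
/- Let n ≥ 2 be an integer, c ≥ 0 a real, i an index in {1, …, n}, and for each j ∈ {1, …, n} let P_j be a finite set of items; let v be a real-valued function on items with 0 ≤ v(g) ≤ 1 for every item g. Suppose that for every j ≠ i, Σ_{g∈P_j} v(g) − Σ_{g∈P_i} v(g) ≤ c · s_j, where s_j denotes the maximum of v(g) over g ∈ P_j (and s_j := 0 if P_j is empty). Then (1/n) Σ_{j=1}^n Σ_{g∈P_j} v(g) − Σ_{g∈P_i} v(g) ≤ c. -/
/-- The maximum value of `v` over a finite set, with value `0` on the empty set. -/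
noncomputable def maxVal {α : Type*} (s : Finset α) (v : α → ℝ) : ℝ :=
  if h : s.Nonempty then s.sup' h v else 0

/-- **EF×(c) implies bPROP(c) on bounded instances.**
Let `n ≥ 2`, `c ≥ 0`, `i` an agent, `P j` the bundle of agent `j`, and `v`
agent `i`'s valuation with `0 ≤ v g ≤ 1`. If for every `j ≠ i`,
`v (P j) - v (P i) ≤ c * max_{g ∈ P j} v g` (with the max equal to `0` on an
empty bundle), then agent `i`'s proportionality deficit is at most `c`:
`(1/n) ∑ j, v (P j) - v (P i) ≤ c`. -/
theorem efx_implies_bprop (n : ℕ) (hn : 2 ≤ n) (c : ℝ) (hc : 0 ≤ c)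
    (Item : Type*) (P : Fin n → Finset Item) (v : Item → ℝ)
    (hv0 : ∀ g, 0 ≤ v g) (hv1 : ∀ g, v g ≤ 1) (i : Fin n)
    (hEF : ∀ j, j ≠ i →
      (∑ g ∈ P j, v g) - (∑ g ∈ P i, v g) ≤ c * maxVal (P j) v) :
    (1 / (n : ℝ)) * (∑ j, ∑ g ∈ P j, v g) - ∑ g ∈ P i, v g ≤ c := by
  have hn0 : (0:ℝ) < n := by positivity
  have hmax : ∀ j, maxVal (P j) v ≤ 1 := by
    intro j
    unfold maxVal
    split
    · exact Finset.sup'_le _ _ fun g _ => hv1 g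
    · norm_num
  have key : ∀ j, (∑ g ∈ P j, v g) - (∑ g ∈ P i, v g) ≤ c := by
    intro j
    by_cases h : j = i
    · subst h; simpa using hc
    · calc (∑ g ∈ P j, v g) - (∑ g ∈ P i, v g) ≤ c * maxVal (P j) v := hEF j h
        _ ≤ c * 1 := mul_le_mul_of_nonneg_left (hmax j) hc
        _ = c := mul_one c
  have hsum : (∑ j, ∑ g ∈ P j, v g) - n * (∑ g ∈ P i, v g) ≤ n * c := by
    have h1 : ∑ j : Fin n, ((∑ g ∈ P j, v g) - (∑ g ∈ P i, v g)) ≤ ∑ _j : Fin n, c :=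
      Finset.sum_le_sum fun j _ => key j
    simpa [Finset.sum_sub_distrib, Finset.sum_const, Finset.card_univ, nsmul_eq_mul] using h1
  rw [sub_le_iff_le_add, one_div, inv_mul_le_iff₀ hn0]
  nlinarith [hsum]
end
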